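/- arXiv:2212.06941 — 9 statements merged into one kernel-verified Lean document; each statement's English description precedes it below -/
import Mathlib

section
/- Let Γ be a rooted tree with edge set E and positive edge lengths t : E → ℝ, and suppose the pair (Γ, t) minimizes P₂ over all rooted trees with the same number of edges together with all assignments of the same multiset of lengths {t_e : e ∈ E} to their edges. Then every vertex of Γ other than the root has degree at most 2; equivalently, Γ is a union of simple chains emanating from the root. -/
/-- A rooted tree with edge set `E`, encoded by its parent-edge function:
`par e = some f` if `f` is the next edge on the simple path from `e` towards the
root, and `par e = none` if `e` is incident to the root.  Acyclicity (hence, for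
a finite edge set, that we really get a tree with vertex set `E ⊕ {root}`) is
guaranteed by a rank function decreasing along `par`. -/
structure EdgeRootedTree (E : Type*) where
  par : E → Option E
  wf : ∃ rank : E → ℕ, ∀ a b, par a = some b → rank b < rank a

namespace EdgeRootedTree

variable {E : Type*}

/-- `Γ.inUp e f` : the edge `f` lies on the simple path from `e` to the root
(`f` is an ancestor of `e`, or `f = e`). -/
def inUp (Γ : EdgeRootedTree E) (e f : E) : Prop :=
  Relation.ReflTransGen (fun a b => Γ.par a = some b) e f

open scoped Classical in
/-- `up(e)` : the set of edges of the simple path from `e` to the root, `e` included. -/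
noncomputable def up (Γ : EdgeRootedTree E) [Fintype E] (e : E) : Finset E :=
  Finset.univ.filter (Γ.inUp e)

/-- An edge is hanging if its lower endpoint is a leaf distinct from the root,
i.e. if it has no child edge. -/
def IsHanging (Γ : EdgeRootedTree E) (e : E) : Prop :=
  ∀ f, Γ.par f ≠ some e

open scoped Classical in
/-- The set `H` of hanging edges. -/
noncomputable def hanging (Γ : EdgeRootedTree E) [Fintype E] : Finset E :=
  Finset.univ.filter Γ.IsHanging

/-- The second asymptotic coefficient polynomial `P₂`, defined by
`2 P₂ = -(Σ_E t)² - Σ_E t² - Σ_H t² + 2 (Σ_H t)(Σ_E t) + Σ_{e∈E} Σ_{f∈up(e)} t_e t_f`. -/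
noncomputable def P2 [Fintype E] (Γ : EdgeRootedTree E) (t : E → ℝ) : ℝ :=
  (-(∑ e, t e) ^ 2 - ∑ e, t e ^ 2 - ∑ e ∈ Γ.hanging, t e ^ 2
      + 2 * (∑ e ∈ Γ.hanging, t e) * (∑ e, t e)
      + ∑ e, ∑ f ∈ Γ.up e, t e * t f) / 2

end EdgeRootedTree

section AuxChains

variable {E : Type*}

private lemma aux_rank_le {p : E → Option E} {rank : E → ℕ}
    (hr : ∀ a b, p a = some b → rank b < rank a)
    {x y : E} (h : Relation.ReflTransGen (fun a b => p a = some b) x y) :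
    rank y ≤ rank x := by
  induction h with
  | refl => exact le_rfl
  | tail _ h2 ih => exact le_trans (le_of_lt (hr _ _ h2)) ih

private lemma aux_split {p : E → Option E} {x y z : E}
    (h1 : Relation.ReflTransGen (fun a b => p a = some b) x y)
    (h2 : Relation.ReflTransGen (fun a b => p a = some b) x z) :
    Relation.ReflTransGen (fun a b => p a = some b) z y ∨
      Relation.ReflTransGen (fun a b => p a = some b) y z := by
  revert h2
  induction h1 using Relation.ReflTransGen.head_induction_on with
  | refl => exact fun h2 => Or.inr h2
  | head h' hcy ih =>
      intro h2
      rcases h2.cases_head with rfl | ⟨c', hc', h2'⟩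
      · exact Or.inl (hcy.head h')
      · have : c' = _ := Option.some.inj (hc'.symm.trans h')
        subst this
        exact ih h2'

end AuxChains

open EdgeRootedTree in
/-- If the rooted tree `Γ` together with the positive edge lengths `t`
minimizes `P₂` among all rooted trees on the same edge set together with all
reassignments of the same multiset of lengths (i.e. all `t ∘ σ` for permutations `σ`),
then every vertex of `Γ` other than the root has degree at most `2`; equivalently,
every edge has at most one child edge, i.e. `Γ` is a union of simple chains
emanating from the root. -/
theorem minimal_growth_tree_is_union_of_chains
    {E : Type*} [Fintype E] (Γ : EdgeRootedTree E) (t : E → ℝ)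
    (ht : ∀ e, 0 < t e)
    (hmin : ∀ (Γ' : EdgeRootedTree E) (σ : Equiv.Perm E), P2 Γ t ≤ P2 Γ' (t ∘ σ)) :
    ∀ e f g : E, Γ.par f = some e → Γ.par g = some e → f = g := by
  classical
  intro e f g hf hg
  by_contra hfg
  obtain ⟨rank, hrank⟩ := Γ.wf
  set R : E → E → Prop := fun a b => Γ.par a = some b with hRdef
  -- the modified tree: reattach `g` to the parent of `e`
  set par' : E → Option E := Function.update Γ.par g (Γ.par e) with hpar'def
  have hpar' : ∀ a, a ≠ g → par' a = Γ.par a := fun a ha => Function.update_of_ne ha _ _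
  have hparg : par' g = Γ.par e := Function.update_self _ _ _
  have hrank_ge : rank e < rank g := hrank g e hg
  have hwf' : ∀ a b, par' a = some b → rank b < rank a := by
    intro a b hab
    rcases eq_or_ne a g with rfl | hag
    · rw [hparg] at hab
      exact lt_trans (hrank e b hab) hrank_ge
    · exact hrank a b ((hpar' a hag) ▸ hab)
  set Γ' : EdgeRootedTree E := ⟨par', ⟨rank, hwf'⟩⟩ with hΓ'def
  set R' : E → E → Prop := fun a b => par' a = some b with hR'def
  have hΓ'par : Γ'.par = par' := rfl
  -- basic conversion: any R'-step is R-reachable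
  have L4 : ∀ x y, Relation.ReflTransGen R' x y → Relation.ReflTransGen R x y := by
    intro x y h
    induction h with
    | refl => exact .refl
    | tail _ h2 ih =>
        rename_i b c _
        rcases eq_or_ne b g with rfl | hbg
        · have : Γ.par e = some c := by rw [← hparg]; exact h2
          exact (ih.tail hg).tail this
        · refine ih.tail ?_
          show Γ.par b = some c
          rw [← hpar' b hbg]; exact h2
  have not_e_g : ¬ Relation.ReflTransGen R e g := fun h =>
    absurd (aux_rank_le hrank h) (not_le.2 hrank_ge)
  -- from a vertex in the subtree of `g`, the new path to the root
  have L3 : ∀ x y, Relation.ReflTransGen R x y → Relation.ReflTransGen R y g →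
      Relation.ReflTransGen R' x y := by
    intro x y h hyg
    induction h using Relation.ReflTransGen.head_induction_on with
    | refl => exact .refl
    | head h' hcy ih =>
        rename_i a c
        rcases eq_or_ne a g with rfl | hag
        · have : c = e := Option.some.inj (h'.symm.trans hg)
          subst this
          exact absurd (hcy.trans hyg) not_e_g
        · refine ih.head ?_
          show par' a = some c
          rw [hpar' a hag]; exact h'
  have avoid2 : ∀ x y, Relation.ReflTransGen R x y →
      Relation.ReflTransGen R' x y ∨ Relation.ReflTransGen R x g := by
    intro x y h
    induction h using Relation.ReflTransGen.head_induction_on with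
    | refl => exact Or.inl .refl
    | head h' hcy ih =>
        rename_i a c
        rcases eq_or_ne a g with rfl | hag
        · exact Or.inr .refl
        · rcases ih with ih | ih
          · refine Or.inl (ih.head ?_)
            show par' a = some c
            rw [hpar' a hag]; exact h'
          · exact Or.inr (ih.head h')
  -- up-sets of vertices not above g are unchanged
  have up_eq : ∀ x, ¬ Relation.ReflTransGen R x g → Γ'.up x = Γ.up x := by
    intro x hx
    ext y
    simp only [EdgeRootedTree.up, EdgeRootedTree.inUp, Finset.mem_filter, Finset.mem_univ,
      true_and, hΓ'par]
    constructor
    · exact fun h => L4 x y h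
    · intro h
      rcases avoid2 x y h with h' | h'
      · exact h'
      · exact absurd h' hx
  -- up-sets of vertices above g lose exactly `e`
  have up_erase : ∀ x, Relation.ReflTransGen R x g →
      ∀ y, Relation.ReflTransGen R' x y ↔ (Relation.ReflTransGen R x y ∧ y ≠ e) := by
    intro x hx y
    have hx' : Relation.ReflTransGen R' x g := L3 x g hx .refl
    constructor
    · intro h'
      refine ⟨L4 x y h', ?_⟩
      intro hye
      rw [hye] at h'
      rcases aux_split h' hx' with hge | heg
      · -- Relation.ReflTransGen R' g e
        rcases hge.cases_head with heq | ⟨c, hc, hce⟩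
        · -- g = e
          exact absurd (hrank e e (heq ▸ hg)) (lt_irrefl _)
        · have hc2 : Γ.par e = some c := by rw [← hparg]; exact hc
          have : rank e ≤ rank c := aux_rank_le hrank (L4 c e hce)
          exact absurd this (not_le.2 (hrank e c hc2))
      · exact not_e_g (L4 e g heg)
    · rintro ⟨h, hne⟩
      rcases aux_split h hx with hgy | hyg
      · -- Relation.ReflTransGen R g y
        rcases hgy.cases_head with rfl | ⟨c, hc, hcy⟩
        · exact hx'
        · have hce : c = e := Option.some.inj (hc.symm.trans hg)
          rw [hce] at hcy
          rcases hcy.cases_head with rfl | ⟨p, hp, hpy⟩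
          · exact absurd rfl hne
          · have hgp : R' g p := by show par' g = some p; rw [hparg]; exact hp
            have hnp : ¬ Relation.ReflTransGen R p g := by
              intro hpg
              have h1 : rank g ≤ rank p := aux_rank_le hrank hpg
              have h2 : rank p < rank e := hrank e p hp
              omega
            rcases avoid2 p y hpy with h' | h'
            · exact hx'.trans (h'.head hgp)
            · exact absurd h' hnp
      · exact L3 x y h hyg
  have he_mem : ∀ x, Relation.ReflTransGen R x g → Relation.ReflTransGen R x e :=
    fun x hx => hx.tail hg
  -- hanging sets coincide
  have hang_eq : Γ'.hanging = Γ.hanging := by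
    ext x
    simp only [EdgeRootedTree.hanging, EdgeRootedTree.IsHanging, Finset.mem_filter,
      Finset.mem_univ, true_and, hΓ'par]
    constructor
    · intro h' c hc
      rcases eq_or_ne c g with rfl | hcg
      · have : x = e := Option.some.inj (hc.symm.trans hg)
        subst this
        exact h' f (by rw [hpar' f hfg]; exact hf)
      · exact h' c (by rw [hpar' c hcg]; exact hc)
    · intro h c hc
      rcases eq_or_ne c g with rfl | hcg
      · rw [hparg] at hc
        exact h e hc
      · rw [hpar' c hcg] at hc
        exact h c hc
  -- the subtree of g
  set Sg : Finset E := Finset.univ.filter (fun x => Relation.ReflTransGen R x g) with hSg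
  have key : ∀ x, ∑ f ∈ Γ'.up x, t x * t f
      = (∑ f ∈ Γ.up x, t x * t f) - (if Relation.ReflTransGen R x g then t x * t e else 0) := by
    intro x
    by_cases hx : Relation.ReflTransGen R x g
    · rw [if_pos hx]
      have hupe : Γ'.up x = (Γ.up x).erase e := by
        ext y
        simp only [EdgeRootedTree.up, EdgeRootedTree.inUp, Finset.mem_filter, Finset.mem_univ,
          true_and, hΓ'par, Finset.mem_erase]
        rw [up_erase x hx y]
        tauto
      rw [hupe, Finset.sum_erase_eq_sub]
      simp only [EdgeRootedTree.up, EdgeRootedTree.inUp, Finset.mem_filter, Finset.mem_univ,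
        true_and]
      exact he_mem x hx
    · rw [if_neg hx, up_eq x hx, sub_zero]
  have keysum : ∑ x, ∑ f ∈ Γ'.up x, t x * t f
      = (∑ x, ∑ f ∈ Γ.up x, t x * t f) - ∑ x ∈ Sg, t x * t e := by
    rw [Finset.sum_congr rfl (fun x _ => key x), Finset.sum_sub_distrib]
    congr 1
    rw [hSg, Finset.sum_filter]
  have hP2 : P2 Γ' t = P2 Γ t - (∑ x ∈ Sg, t x * t e) / 2 := by
    unfold EdgeRootedTree.P2
    rw [hang_eq, keysum]
    ring
  have hpos : 0 < ∑ x ∈ Sg, t x * t e :=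
    Finset.sum_pos (fun i _ => mul_pos (ht i) (ht e))
      ⟨g, Finset.mem_filter.2 ⟨Finset.mem_univ g, Relation.ReflTransGen.refl⟩⟩
  have hle := hmin Γ' (Equiv.refl E)
  have : t ∘ ⇑(Equiv.refl E) = t := by ext x; simp
  rw [this] at hle
  rw [hP2] at hle
  linarith
end

section
/- Let Γ be a rooted tree with edge set E of cardinality |E| ≥ 2 and positive edge lengths t : E → ℝ, and suppose the pair (Γ, t) minimizes P₂ over all rooted trees with the same number of edges together with all assignments of the same multiset of lengths {t_e : e ∈ E} to their edges. Then no hanging edge of Γ is incident to the root; in particular, if Γ is a union of simple chains emanating from the root, each such chain contains at least 2 edges. -/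
namespace EdgeRootedTree

variable {E : Type*}

/-- If `q` is hanging, the only edge having `q` on its path to the root is `q` itself. -/
lemma eq_of_inUp_hanging (Γ : EdgeRootedTree E) {q x : E} (hq : Γ.IsHanging q)
    (h : Γ.inUp x q) : x = q := by
  induction h using Relation.ReflTransGen.head_induction_on with
  | refl => rfl
  | head hab _ ih => subst ih; exact absurd hab (hq _)

lemma mem_up_iff (Γ : EdgeRootedTree E) [Fintype E] {x f : E} :
    f ∈ Γ.up x ↔ Γ.inUp x f := by
  simp [up]

lemma mem_hanging_iff (Γ : EdgeRootedTree E) [Fintype E] {x : E} :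
    x ∈ Γ.hanging ↔ Γ.IsHanging x := by
  simp [hanging]

end EdgeRootedTree

open EdgeRootedTree in
/-- Let `Γ` be a rooted tree with at least two edges and positive edge
lengths `t`, and suppose `(Γ, t)` minimizes `P₂` among all rooted trees on the same edge
set together with all reassignments of the same multiset of lengths (all `t ∘ σ`).
Then no hanging edge of `Γ` is incident to the root (so each chain emanating from the
root has at least two edges). -/
theorem minimal_growth_tree_no_hanging_edge_at_root
    {E : Type*} [Fintype E] (hE : 2 ≤ Fintype.card E)
    (Γ : EdgeRootedTree E) (t : E → ℝ)
    (ht : ∀ e, 0 < t e)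
    (hmin : ∀ (Γ' : EdgeRootedTree E) (σ : Equiv.Perm E), P2 Γ t ≤ P2 Γ' (t ∘ σ)) :
    ∀ e : E, Γ.IsHanging e → Γ.par e ≠ none := by
  classical
  intro e he hnone
  obtain ⟨rank, hrank⟩ := Γ.wf
  have hne : (Finset.univ.erase e).Nonempty := by
    rw [← Finset.card_pos, Finset.card_erase_of_mem (Finset.mem_univ e), Finset.card_univ]
    omega
  obtain ⟨p, hpmem, hpmax⟩ := Finset.exists_max_image _ rank hne
  have hpe : p ≠ e := (Finset.mem_erase.mp hpmem).1
  have hp_hang : Γ.IsHanging p := by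
    intro g hg
    have hge : g ≠ e := by rintro rfl; rw [hnone] at hg; exact Option.some_ne_none _ hg.symm
    have h1 := hpmax g (Finset.mem_erase.mpr ⟨hge, Finset.mem_univ g⟩)
    have h2 := hrank g p hg
    omega
  -- the modified tree: attach `e` below `p`
  set Γ' : EdgeRootedTree E :=
    ⟨fun x => if x = e then some p else Γ.par x,
     ⟨fun x => if x = e then rank p + 1 else rank x, by
        intro a b hab
        dsimp only at hab ⊢
        by_cases ha : a = e
        · subst ha
          rw [if_pos rfl] at hab
          have hb : b = p := (Option.some.inj hab).symm
          subst hb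
          simp [hpe]
        · rw [if_neg ha] at hab
          have hb : b ≠ e := by rintro rfl; exact he a hab
          rw [if_neg ha, if_neg hb]
          exact hrank a b hab⟩⟩ with hΓ'
  have hpar' : ∀ a, Γ'.par a = if a = e then some p else Γ.par a := fun a => rfl
  -- `up` sets of `Γ'`
  have hchain' : ∀ x f : E, x ≠ e → (Γ'.inUp x f ↔ Γ.inUp x f) := by
    intro x f hx
    constructor
    · intro h
      induction h using Relation.ReflTransGen.head_induction_on with
      | refl => exact Relation.ReflTransGen.refl
      | head hab hcf ih =>
        rename_i a c
        rw [hpar' a, if_neg hx] at hab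
        have hc : c ≠ e := by rintro rfl; exact he a hab
        exact (ih hc).head hab
    · intro h
      induction h using Relation.ReflTransGen.head_induction_on with
      | refl => exact Relation.ReflTransGen.refl
      | head hab hcf ih =>
        rename_i a c
        have hc : c ≠ e := by rintro rfl; exact he a hab
        have hab' : Γ'.par a = some c := by rw [hpar' a, if_neg hx]; exact hab
        exact (ih hc).head hab'
  have hup'_ne : ∀ x, x ≠ e → Γ'.up x = Γ.up x := by
    intro x hx
    ext f
    simp only [mem_up_iff]
    exact hchain' x f hx
  have hup_e : Γ.up e = {e} := by
    ext f
    simp only [mem_up_iff, Finset.mem_singleton]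
    constructor
    · intro h
      rcases Relation.ReflTransGen.cases_head h with h1 | ⟨c, hc, _⟩
      · exact h1.symm
      · rw [hnone] at hc; exact (Option.some_ne_none _ hc.symm).elim
    · rintro rfl; exact Relation.ReflTransGen.refl
  have he_not_up_p : e ∉ Γ.up p := by
    intro h
    exact hpe (Γ.eq_of_inUp_hanging he (Γ.mem_up_iff.mp h))
  have hp_up : p ∈ Γ.up p := Γ.mem_up_iff.mpr Relation.ReflTransGen.refl
  have hup'_e : Γ'.up e = insert e (Γ.up p) := by
    ext f
    simp only [mem_up_iff, Finset.mem_insert]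
    constructor
    · intro h
      rcases Relation.ReflTransGen.cases_head h with h1 | ⟨c, hc, hcf⟩
      · exact Or.inl h1.symm
      · rw [hpar' e, if_pos rfl] at hc
        have hcp : c = p := (Option.some.inj hc).symm
        subst hcp
        exact Or.inr ((hchain' c f hpe).mp hcf)
    · rintro (rfl | h)
      · exact Relation.ReflTransGen.refl
      · exact ((hchain' p f hpe).mpr h).head (by rw [hpar' e, if_pos rfl])
  have hhang' : Γ'.hanging = Γ.hanging.erase p := by
    ext x
    simp only [mem_hanging_iff, Finset.mem_erase]
    constructor
    · intro hx
      refine ⟨?_, ?_⟩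
      · rintro rfl
        exact hx e (by rw [hpar' e, if_pos rfl])
      · intro g hg
        have hge : g ≠ e := by rintro rfl; rw [hnone] at hg; exact Option.some_ne_none _ hg.symm
        exact hx g (by rw [hpar' g, if_neg hge]; exact hg)
    · rintro ⟨hxp, hx⟩ g hg
      rw [hpar' g] at hg
      by_cases hge : g = e
      · rw [if_pos hge] at hg
        exact hxp (Option.some.inj hg).symm
      · rw [if_neg hge] at hg
        exact hx g hg
  -- the permutation swapping `e` and `p`
  set σ : Equiv.Perm E := Equiv.swap e p with hσ
  have hse : (t ∘ σ) e = t p := by simp [hσ]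
  have hsp : (t ∘ σ) p = t e := by simp [hσ]
  have hsx : ∀ x, x ≠ e → x ≠ p → (t ∘ σ) x = t x := by
    intro x h1 h2
    simp [hσ, Equiv.swap_apply_of_ne_of_ne h1 h2]
  -- memberships
  have heH : e ∈ Γ.hanging := Γ.mem_hanging_iff.mpr he
  have hpH : p ∈ Γ.hanging := Γ.mem_hanging_iff.mpr hp_hang
  have hpHe : p ∈ Γ.hanging.erase e := Finset.mem_erase.mpr ⟨hpe, hpH⟩
  -- global sums are permutation invariant
  have hS : ∑ x, (t ∘ σ) x = ∑ x, t x := Equiv.sum_comp σ t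
  have hSq : ∑ x, (t ∘ σ) x ^ 2 = ∑ x, t x ^ 2 := Equiv.sum_comp σ (fun x => t x ^ 2)
  -- splitting lemma
  have hsplitH : ∀ F : E → ℝ, ∑ x ∈ Γ.hanging, F x
      = F e + (F p + ∑ x ∈ (Γ.hanging.erase e).erase p, F x) := by
    intro F
    rw [← Finset.add_sum_erase _ F heH, ← Finset.add_sum_erase _ F hpHe]
  have hpU : p ∈ Finset.univ.erase e := Finset.mem_erase.mpr ⟨hpe, Finset.mem_univ p⟩
  have hsplitU : ∀ F : E → ℝ, ∑ x, F x
      = F e + (F p + ∑ x ∈ (Finset.univ.erase e).erase p, F x) := by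
    intro F
    rw [← Finset.add_sum_erase _ F (Finset.mem_univ e), ← Finset.add_sum_erase _ F hpU]
  -- hanging sums
  have hH2 : ∀ x ∈ (Γ.hanging.erase e).erase p, (t ∘ σ) x = t x := by
    intro x hx
    rw [Finset.mem_erase, Finset.mem_erase] at hx
    exact hsx x hx.2.1 hx.1
  have hH't : ∑ x ∈ Γ'.hanging, (t ∘ σ) x
      = t p + ∑ x ∈ (Γ.hanging.erase e).erase p, t x := by
    rw [hhang', Finset.erase_right_comm,
      ← Finset.add_sum_erase _ _ (Finset.mem_erase.mpr ⟨fun h => hpe h.symm, heH⟩)]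
    rw [hse]
    congr 1
    · exact Finset.sum_congr (by rw [Finset.erase_right_comm]) (by
        intro x hx
        rw [Finset.erase_right_comm] at hx
        exact hH2 x hx)
  have hH'tsq : ∑ x ∈ Γ'.hanging, (t ∘ σ) x ^ 2
      = t p ^ 2 + ∑ x ∈ (Γ.hanging.erase e).erase p, t x ^ 2 := by
    rw [hhang', Finset.erase_right_comm,
      ← Finset.add_sum_erase _ _ (Finset.mem_erase.mpr ⟨fun h => hpe h.symm, heH⟩)]
    rw [hse]
    congr 1
    · exact Finset.sum_congr (by rw [Finset.erase_right_comm]) (by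
        intro x hx
        rw [Finset.erase_right_comm] at hx
        rw [hH2 x hx])
  -- up-path sums
  have hup_p_s : ∑ f ∈ Γ.up p, (t ∘ σ) f = t e + ∑ f ∈ (Γ.up p).erase p, t f := by
    rw [← Finset.add_sum_erase _ _ hp_up, hsp]
    congr 1
    refine Finset.sum_congr rfl ?_
    intro f hf
    rw [Finset.mem_erase] at hf
    refine hsx f ?_ hf.1
    rintro rfl
    exact he_not_up_p hf.2
  have hup_p_t : ∑ f ∈ Γ.up p, t f = t p + ∑ f ∈ (Γ.up p).erase p, t f := by
    rw [← Finset.add_sum_erase _ _ hp_up]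
  -- edges away from e and p keep their terms
  have hD : ∀ x ∈ (Finset.univ.erase e).erase p,
      ∑ f ∈ Γ'.up x, (t ∘ σ) x * (t ∘ σ) f = ∑ f ∈ Γ.up x, t x * t f := by
    intro x hx
    rw [Finset.mem_erase, Finset.mem_erase] at hx
    have hxe : x ≠ e := hx.2.1
    have hxp : x ≠ p := hx.1
    rw [hup'_ne x hxe, hsx x hxe hxp]
    refine Finset.sum_congr rfl ?_
    intro f hf
    have hfe : f ≠ e := by
      rintro rfl
      exact hxe (Γ.eq_of_inUp_hanging he (Γ.mem_up_iff.mp hf))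
    have hfp : f ≠ p := by
      rintro rfl
      exact hxp (Γ.eq_of_inUp_hanging hp_hang (Γ.mem_up_iff.mp hf))
    rw [hsx f hfe hfp]
  -- the two double sums
  have hA : ∑ x, ∑ f ∈ Γ.up x, t x * t f
      = t e * t e + (t p * (t p + ∑ f ∈ (Γ.up p).erase p, t f)
        + ∑ x ∈ (Finset.univ.erase e).erase p, ∑ f ∈ Γ.up x, t x * t f) := by
    rw [hsplitU (fun x => ∑ f ∈ Γ.up x, t x * t f)]
    rw [hup_e, Finset.sum_singleton, ← Finset.mul_sum, hup_p_t]
  have hA' : ∑ x, ∑ f ∈ Γ'.up x, (t ∘ σ) x * (t ∘ σ) f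
      = t p * (t p + (t e + ∑ f ∈ (Γ.up p).erase p, t f))
        + (t e * (t e + ∑ f ∈ (Γ.up p).erase p, t f)
        + ∑ x ∈ (Finset.univ.erase e).erase p, ∑ f ∈ Γ.up x, t x * t f) := by
    rw [hsplitU (fun x => ∑ f ∈ Γ'.up x, (t ∘ σ) x * (t ∘ σ) f)]
    congr 1
    · rw [hup'_e, Finset.sum_insert he_not_up_p, ← Finset.mul_sum, hse, hup_p_s]
      ring
    congr 1
    · rw [hup'_ne p hpe, ← Finset.mul_sum, hsp, hup_p_s]
    · exact Finset.sum_congr rfl hD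
  -- bound: the length of the path up(p) is at most S - t e
  have hsub : Γ.up p ⊆ Finset.univ.erase e := by
    intro f hf
    refine Finset.mem_erase.mpr ⟨?_, Finset.mem_univ f⟩
    rintro rfl
    exact he_not_up_p hf
  have hUle : ∑ f ∈ Γ.up p, t f ≤ ∑ f ∈ Finset.univ.erase e, t f :=
    Finset.sum_le_sum_of_subset_of_nonneg hsub (fun i _ _ => (ht i).le)
  have hSe : ∑ f ∈ Finset.univ.erase e, t f = (∑ x, t x) - t e := by
    rw [← Finset.add_sum_erase _ t (Finset.mem_univ e)]
    ring
  have hbound : t p + ∑ f ∈ (Γ.up p).erase p, t f ≤ (∑ x, t x) - t e := by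
    rw [← hup_p_t, ← hSe]
    exact hUle
  have hSpos : 0 < ∑ x, t x := Finset.sum_pos (fun i _ => ht i) ⟨e, Finset.mem_univ e⟩
  -- the strict decrease of P2
  have key : P2 Γ' (t ∘ σ) < P2 Γ t := by
    unfold P2
    rw [hS, hSq, hH't, hH'tsq, hA, hA',
      hsplitH t, hsplitH (fun x => t x ^ 2)]
    have h1 : t e * (t p + ∑ f ∈ (Γ.up p).erase p, t f) ≤ t e * ((∑ x, t x) - t e) :=
      mul_le_mul_of_nonneg_left hbound (ht e).le
    have h2 : 0 < t e * ∑ x, t x := mul_pos (ht e) hSpos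
    nlinarith [h1, h2]
  have := hmin Γ' σ
  linarith
end

section
/- Let Γ be a rooted tree with positive edge lengths t, let e be a non-hanging edge of Γ, and let b be a hanging edge that is a proper descendant of e. Set l = up(b) \ ({b} ∪ up(e)) (the edges strictly between b and e on the path from b to the root) and D = the set of proper descendants of e other than b. Let Γ' be the rooted tree obtained from Γ by the transformation T1: delete e (attaching the subtrees below e's lower endpoint directly to e's upper endpoint) and re-insert e between the hanging edge b and its parent vertex, keeping all edge lengths. Then 2·P₂(Γ, t) − 2·P₂(Γ', t) = t_e · Σ_{f ∈ D \ l} t_f. -/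
namespace EdgeRootedTree

variable {E : Type*}

open scoped Classical in
/-- The parent function of the tree obtained from `Γ` by the transformation **T1**:
the edge `e` is deleted (the subtrees below the lower endpoint of `e` are attached
directly to the upper endpoint of `e`) and re-inserted between the hanging edge `b`
and its parent vertex. -/
noncomputable def T1par (Γ : EdgeRootedTree E) (e b : E) : E → Option E := fun f =>
  if f = b then some e
  else if f = e then (if Γ.par b = some e then Γ.par e else Γ.par b)
  else if Γ.par f = some e then Γ.par e
  else Γ.par f

end EdgeRootedTree

namespace EdgeRootedTree

section T1aux

variable {E : Type*} {Γ Γ' : EdgeRootedTree E} {e b : E}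

lemma inUp_iff' (Γ : EdgeRootedTree E) (f h : E) :
    Γ.inUp f h ↔ f = h ∨ ∃ c, Γ.par f = some c ∧ Γ.inUp c h := by
  constructor
  · intro hfh
    rcases Relation.ReflTransGen.cases_head hfh with rfl | ⟨c, hc, h2⟩
    · exact Or.inl rfl
    · exact Or.inr ⟨c, hc, h2⟩
  · rintro (rfl | ⟨c, hc, h2⟩)
    · exact Relation.ReflTransGen.refl
    · exact Relation.ReflTransGen.head hc h2

lemma inUp_iff_some {f c : E} (hc : Γ.par f = some c) (h : E) :
    Γ.inUp f h ↔ f = h ∨ Γ.inUp c h := by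
  rw [Γ.inUp_iff']
  constructor
  · rintro (rfl | ⟨d, hd, h2⟩)
    · exact Or.inl rfl
    · rw [hc] at hd
      exact Or.inr (Option.some_inj.1 hd ▸ h2)
  · rintro (rfl | h2)
    · exact Or.inl rfl
    · exact Or.inr ⟨c, hc, h2⟩

lemma inUp_iff_none {f : E} (hc : Γ.par f = none) (h : E) :
    Γ.inUp f h ↔ f = h := by
  rw [Γ.inUp_iff']
  constructor
  · rintro (rfl | ⟨d, hd, _⟩)
    · rfl
    · rw [hc] at hd; cases hd
  · rintro rfl; exact Or.inl rfl

lemma rank_le_of_inUp {rank : E → ℕ}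
    (hrank : ∀ a b, Γ.par a = some b → rank b < rank a) {a c : E} (h : Γ.inUp a c) :
    rank c ≤ rank a := by
  induction h with
  | refl => exact le_rfl
  | tail _ h2 ih => exact le_trans (le_of_lt (hrank _ _ h2)) ih

lemma rank_lt_of_inUp {rank : E → ℕ}
    (hrank : ∀ a b, Γ.par a = some b → rank b < rank a) {a c : E} (h : Γ.inUp a c)
    (hne : a ≠ c) : rank c < rank a := by
  rcases Relation.ReflTransGen.cases_head h with rfl | ⟨d, hd, h2⟩
  · exact absurd rfl hne
  · exact lt_of_le_of_lt (rank_le_of_inUp hrank h2) (hrank _ _ hd)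

lemma inUp_trans' {a b c : E} (h1 : Γ.inUp a b) (h2 : Γ.inUp b c) :
    Γ.inUp a c := Relation.ReflTransGen.trans h1 h2

lemma inUp_comparable {a f g : E}
    (h1 : Γ.inUp a f) (h2 : Γ.inUp a g) : Γ.inUp f g ∨ Γ.inUp g f := by
  revert h1
  induction h2 using Relation.ReflTransGen.head_induction_on with
  | refl => intro h1; exact Or.inr h1
  | head h' hcg ih =>
    intro h1
    rcases (Γ.inUp_iff' _ _).1 h1 with rfl | ⟨c', hc', h1'⟩
    · exact Or.inl (Relation.ReflTransGen.head h' hcg)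
    · rw [h'] at hc'
      exact ih (Option.some_inj.1 hc' ▸ h1')

open scoped Classical in
lemma T1_lemA (hΓ' : Γ'.par = Γ.T1par e b) (hdesc : Γ.inUp b e) :
    ∀ f, ¬ Γ.inUp f e → ∀ h, (Γ'.inUp f h ↔ Γ.inUp f h) := by
  obtain ⟨rank, hrank⟩ := Γ.wf
  suffices H : ∀ n f, rank f < n → ¬ Γ.inUp f e → ∀ h, (Γ'.inUp f h ↔ Γ.inUp f h) from
    fun f => H (rank f + 1) f (Nat.lt_succ_self _)
  intro n
  induction n with
  | zero => exact fun f hf => absurd hf (Nat.not_lt_zero _)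
  | succ n ih =>
    intro f hf hfe h
    have hfb : f ≠ b := fun h' => hfe (h' ▸ hdesc)
    have hfe' : f ≠ e := fun h' => hfe (h' ▸ Relation.ReflTransGen.refl)
    have hpar : Γ'.par f = Γ.par f := by
      rw [hΓ']; unfold T1par
      rw [if_neg hfb, if_neg hfe', if_neg (fun hx => hfe (Relation.ReflTransGen.single hx))]
    have hch : ∀ c, Γ.par f = some c → (Γ'.inUp c h ↔ Γ.inUp c h) := fun c hc =>
      ih c (lt_of_lt_of_le (hrank _ _ hc) (Nat.lt_succ_iff.1 hf))
        (fun hc' => hfe (Relation.ReflTransGen.head hc hc')) h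
    rw [Γ'.inUp_iff', Γ.inUp_iff', hpar]
    constructor
    · rintro (rfl | ⟨c, hc, h2⟩)
      · exact Or.inl rfl
      · exact Or.inr ⟨c, hc, (hch c hc).1 h2⟩
    · rintro (rfl | ⟨c, hc, h2⟩)
      · exact Or.inl rfl
      · exact Or.inr ⟨c, hc, (hch c hc).2 h2⟩

open scoped Classical in
lemma T1_lemB (hΓ' : Γ'.par = Γ.T1par e b) (hb : Γ.IsHanging b)
    (hdesc : Γ.inUp b e) :
    ∀ f, Γ.inUp f e → f ≠ e → f ≠ b → ∀ h, (Γ'.inUp f h ↔ (Γ.inUp f h ∧ h ≠ e)) := by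
  obtain ⟨rank, hrank⟩ := Γ.wf
  suffices H : ∀ n f, rank f < n → Γ.inUp f e → f ≠ e → f ≠ b → ∀ h,
      (Γ'.inUp f h ↔ (Γ.inUp f h ∧ h ≠ e)) from
    fun f => H (rank f + 1) f (Nat.lt_succ_self _)
  intro n
  induction n with
  | zero => exact fun f hf => absurd hf (Nat.not_lt_zero _)
  | succ n ih =>
    intro f hf hfe hfene hfb h
    obtain ⟨c, hc, hce⟩ : ∃ c, Γ.par f = some c ∧ Γ.inUp c e := by
      rcases (Γ.inUp_iff' f e).1 hfe with rfl | hx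
      · exact absurd rfl hfene
      · exact hx
    by_cases hce' : c = e
    · rw [hce'] at hc
      have hpar : Γ'.par f = Γ.par e := by
        rw [hΓ']; unfold T1par
        rw [if_neg hfb, if_neg hfene, if_pos hc]
      cases hpe : Γ.par e with
      | none =>
        rw [inUp_iff_none (hpar.trans hpe), inUp_iff_some hc, inUp_iff_none hpe]
        constructor
        · rintro rfl; exact ⟨Or.inl rfl, hfene⟩
        · rintro ⟨rfl | rfl, hne'⟩
          · rfl
          · exact absurd rfl hne'
      | some p =>
        have hpnd : ¬ Γ.inUp p e :=
          fun hx => absurd (rank_le_of_inUp hrank hx) (not_le.2 (hrank _ _ hpe))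
        have hA := T1_lemA hΓ' hdesc p hpnd h
        rw [inUp_iff_some (hpar.trans hpe), hA, inUp_iff_some hc, inUp_iff_some hpe]
        have h1 : Γ.inUp p h → h ≠ e := fun hx hx' => hpnd (hx' ▸ hx)
        constructor
        · rintro (rfl | hx)
          · exact ⟨Or.inl rfl, hfene⟩
          · exact ⟨Or.inr (Or.inr hx), h1 hx⟩
        · rintro ⟨rfl | rfl | hx, hne'⟩
          · exact Or.inl rfl
          · exact absurd rfl hne'
          · exact Or.inr hx
    · have hcb : c ≠ b := fun hx => hb f (hx ▸ hc)
      have hpar : Γ'.par f = some c := by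
        rw [hΓ']; unfold T1par
        rw [if_neg hfb, if_neg hfene, if_neg (fun hx : Γ.par f = some e => by
          rw [hc] at hx; exact hce' (Option.some_inj.1 hx))]
        exact hc
      have hB := ih c (lt_of_lt_of_le (hrank _ _ hc) (Nat.lt_succ_iff.1 hf)) hce hce' hcb h
      rw [inUp_iff_some hpar, hB, inUp_iff_some hc]
      constructor
      · rintro (rfl | ⟨hx, hne'⟩)
        · exact ⟨Or.inl rfl, hfene⟩
        · exact ⟨Or.inr hx, hne'⟩
      · rintro ⟨rfl | hx, hne'⟩
        · exact Or.inl rfl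
        · exact Or.inr ⟨hx, hne'⟩

open scoped Classical in
lemma T1_lemC (hΓ' : Γ'.par = Γ.T1par e b) (hb : Γ.IsHanging b)
    (hdesc : Γ.inUp b e) (hne : b ≠ e) :
    ∀ h, Γ'.inUp e h ↔ (Γ.inUp e h ∨ (Γ.inUp b h ∧ h ≠ b ∧ ¬ Γ.inUp e h)) := by
  obtain ⟨rank, hrank⟩ := Γ.wf
  intro h
  obtain ⟨q, hq, hqe⟩ : ∃ q, Γ.par b = some q ∧ Γ.inUp q e := by
    rcases (Γ.inUp_iff' b e).1 hdesc with rfl | hx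
    · exact absurd rfl hne
    · exact hx
  by_cases hqe' : q = e
  · rw [hqe'] at hq
    have hpar : Γ'.par e = Γ.par e := by
      rw [hΓ']; unfold T1par
      rw [if_neg (Ne.symm hne), if_pos rfl, if_pos hq]
    have hbh : Γ.inUp b h ∧ h ≠ b ∧ ¬ Γ.inUp e h → False := by
      rintro ⟨h1, h2, h3⟩
      rcases (inUp_iff_some hq h).1 h1 with rfl | hx
      · exact h2 rfl
      · exact h3 hx
    have main : Γ'.inUp e h ↔ Γ.inUp e h := by
      cases hpe : Γ.par e with
      | none => rw [inUp_iff_none (hpar.trans hpe), inUp_iff_none hpe]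
      | some p =>
        have hpnd : ¬ Γ.inUp p e :=
          fun hx => absurd (rank_le_of_inUp hrank hx) (not_le.2 (hrank _ _ hpe))
        rw [inUp_iff_some (hpar.trans hpe), inUp_iff_some hpe,
          T1_lemA hΓ' hdesc p hpnd h]
    rw [main]
    exact ⟨fun hx => Or.inl hx, fun hx => hx.elim id (fun hy => absurd hy hbh)⟩
  · have hpar : Γ'.par e = some q := by
      rw [hΓ']; unfold T1par
      rw [if_neg (Ne.symm hne), if_pos rfl,
        if_neg (fun hx : Γ.par b = some e => by rw [hq] at hx; exact hqe' (Option.some_inj.1 hx))]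
      exact hq
    have hqb : q ≠ b := fun hx => absurd (hx ▸ hrank _ _ hq) (lt_irrefl _)
    have hB := T1_lemB hΓ' hb hdesc q hqe hqe' hqb h
    rw [inUp_iff_some hpar, hB, inUp_iff_some hq]
    constructor
    · rintro (rfl | ⟨hx, hne'⟩)
      · exact Or.inl Relation.ReflTransGen.refl
      · by_cases hhe : Γ.inUp e h
        · exact Or.inl hhe
        · refine Or.inr ⟨Or.inr hx, ?_, hhe⟩
          rintro rfl
          exact absurd (rank_le_of_inUp hrank hx) (not_le.2 (hrank _ _ hq))
    · rintro (hx | ⟨hbh, hhb, hhe⟩)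
      · by_cases hhe : h = e
        · exact Or.inl hhe.symm
        · exact Or.inr ⟨inUp_trans' hqe hx, hhe⟩
      · rcases hbh with rfl | hx
        · exact absurd rfl hhb
        · exact Or.inr ⟨hx, fun hh => hhe (by rw [hh]; exact Relation.ReflTransGen.refl)⟩

open scoped Classical in
lemma T1_lemD (hΓ' : Γ'.par = Γ.T1par e b) (hb : Γ.IsHanging b)
    (hdesc : Γ.inUp b e) (hne : b ≠ e) :
    ∀ h, Γ'.inUp b h ↔ Γ.inUp b h := by
  intro h
  have hpar : Γ'.par b = some e := by
    rw [hΓ']; unfold T1par; rw [if_pos rfl]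
  rw [inUp_iff_some hpar, T1_lemC hΓ' hb hdesc hne h]
  constructor
  · rintro (rfl | hx | ⟨h1, _, _⟩)
    · exact Relation.ReflTransGen.refl
    · exact inUp_trans' hdesc hx
    · exact h1
  · intro hx
    by_cases hhb : h = b
    · exact Or.inl hhb.symm
    · by_cases hhe : Γ.inUp e h
      · exact Or.inr (Or.inl hhe)
      · exact Or.inr (Or.inr ⟨hx, hhb, hhe⟩)

open scoped Classical in
lemma T1_hangingIff (hΓ' : Γ'.par = Γ.T1par e b) (he : ¬ Γ.IsHanging e)
    (hb : Γ.IsHanging b) (hdesc : Γ.inUp b e) (hne : b ≠ e) :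
    ∀ f, (Γ'.IsHanging f ↔ Γ.IsHanging f) := by
  obtain ⟨rank, hrank⟩ := Γ.wf
  have hpb : Γ'.par b = some e := by rw [hΓ']; unfold T1par; rw [if_pos rfl]
  intro f
  constructor
  · intro hf g hg
    have hfe : f ≠ e := fun hx => hf b (by rw [hpb, hx])
    by_cases hge : g = e
    · rw [hge] at hg
      by_cases hpbe : Γ.par b = some e
      · have hee : Γ'.par e = some f := by
          rw [hΓ']; unfold T1par
          rw [if_neg (Ne.symm hne), if_pos rfl, if_pos hpbe]
          exact hg
        exact hf e hee
      · obtain ⟨c, hc1, hc2⟩ : ∃ c, Γ.inUp b c ∧ Γ.par c = some e := by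
          rcases Relation.ReflTransGen.cases_tail hdesc with hh | ⟨c, h1, h2⟩
          · exact absurd hh.symm hne
          · exact ⟨c, h1, h2⟩
        have hcb : c ≠ b := fun hx => hpbe (hx ▸ hc2)
        have hce : c ≠ e := fun hx => lt_irrefl _ (hrank _ _ (hx ▸ hc2))
        have hcc : Γ'.par c = Γ.par e := by
          rw [hΓ']; unfold T1par; rw [if_neg hcb, if_neg hce, if_pos hc2]
        exact hf c (hcc.trans hg)
    · by_cases hgb : g = b
      · rw [hgb] at hg
        have hx : Γ.par b ≠ some e :=
          fun hx => hfe ((Option.some_inj.1 (hx.symm.trans hg)).symm)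
        have hee : Γ'.par e = some f := by
          rw [hΓ']; unfold T1par
          rw [if_neg (Ne.symm hne), if_pos rfl, if_neg hx]
          exact hg
        exact hf e hee
      · have hge2 : Γ.par g ≠ some e :=
          fun hx => hfe ((Option.some_inj.1 (hx.symm.trans hg)).symm)
        have hgg : Γ'.par g = some f := by
          rw [hΓ']; unfold T1par
          rw [if_neg hgb, if_neg hge, if_neg hge2]
          exact hg
        exact hf g hgg
  · intro hf g hg
    have hfe : f ≠ e := fun hx => he (hx ▸ hf)
    rw [hΓ'] at hg; unfold T1par at hg
    by_cases hgb : g = b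
    · rw [if_pos hgb] at hg; exact hfe ((Option.some_inj.1 hg).symm)
    · rw [if_neg hgb] at hg
      by_cases hge : g = e
      · rw [if_pos hge] at hg
        by_cases hpbe : Γ.par b = some e
        · rw [if_pos hpbe] at hg; exact hf e hg
        · rw [if_neg hpbe] at hg; exact hf b hg
      · rw [if_neg hge] at hg
        by_cases hpge : Γ.par g = some e
        · rw [if_pos hpge] at hg; exact hf e hg
        · rw [if_neg hpge] at hg; exact hf g hg

end T1aux

end EdgeRootedTree



open EdgeRootedTree in
open scoped Classical in
/-- Let `e` be a non-hanging edge of the rooted tree `Γ` and `b` a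
hanging edge which is a proper descendant of `e`.  With
`l = up(b) \ ({b} ∪ up(e))` and `D` the set of proper descendants of `e` other than
`b`, if `Γ'` is obtained from `Γ` by the transformation T1 (keeping the edge lengths),
then `2 P₂(Γ,t) - 2 P₂(Γ',t) = t_e ⬝ Σ_{f ∈ D \ l} t_f`. -/
theorem T1_P2_difference
    {E : Type*} [Fintype E] (Γ Γ' : EdgeRootedTree E) (t : E → ℝ)
    (ht : ∀ x, 0 < t x) (e b : E)
    (he : ¬ Γ.IsHanging e) (hb : Γ.IsHanging b)
    (hdesc : Γ.inUp b e) (hne : b ≠ e)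
    (hΓ' : Γ'.par = T1par Γ e b) :
    2 * P2 Γ t - 2 * P2 Γ' t =
      t e * ∑ f ∈ (Finset.univ.filter fun f => Γ.inUp f e ∧ f ≠ e ∧ f ≠ b) \
          (Γ.up b \ insert b (Γ.up e)), t f := by
  classical
  have mem_up : ∀ (G : EdgeRootedTree E) (f h : E), h ∈ G.up f ↔ G.inUp f h := by
    intro G f h
    simp [up]
  have hangEq : Γ'.hanging = Γ.hanging := by
    unfold hanging
    ext f
    simp only [Finset.mem_filter, Finset.mem_univ, true_and]
    exact T1_hangingIff hΓ' he hb hdesc hne f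
  set D := (Finset.univ.filter fun f => Γ.inUp f e ∧ f ≠ e ∧ f ≠ b) with hD
  set L := Γ.up b \ insert b (Γ.up e) with hL
  have memD : ∀ f, f ∈ D ↔ (Γ.inUp f e ∧ f ≠ e ∧ f ≠ b) := by
    intro f; rw [hD, Finset.mem_filter]; simp
  have memL : ∀ f, f ∈ L ↔ (Γ.inUp b f ∧ ¬(f = b ∨ Γ.inUp e f)) := by
    intro f
    rw [hL, Finset.mem_sdiff, Finset.mem_insert, mem_up]
    simp only [mem_up]
  have upO : ∀ f, ¬ Γ.inUp f e → Γ'.up f = Γ.up f := by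
    intro f hfe; ext h
    simp only [mem_up, T1_lemA hΓ' hdesc f hfe h]
  have upb : Γ'.up b = Γ.up b := by
    ext h; simp only [mem_up, T1_lemD hΓ' hb hdesc hne h]
  have upD : ∀ f ∈ D, Γ'.up f = Γ.up f \ {e} := by
    intro f hf
    obtain ⟨h1, h2, h3⟩ := (memD f).1 hf
    ext h
    simp only [mem_up, Finset.mem_sdiff, Finset.mem_singleton,
      T1_lemB hΓ' hb hdesc f h1 h2 h3 h]
  have upe : Γ'.up e = Γ.up e ∪ L := by
    ext h
    simp only [mem_up, Finset.mem_union, memL h, T1_lemC hΓ' hb hdesc hne h]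
    tauto
  have hLD : L ⊆ D := by
    intro f hf
    obtain ⟨h1, h2⟩ := (memL f).1 hf
    push_neg at h2
    rcases inUp_comparable h1 hdesc with h3 | h3
    · rw [memD]
      refine ⟨h3, ?_, h2.1⟩
      rintro rfl
      exact h2.2 Relation.ReflTransGen.refl
    · exact absurd h3 h2.2
  have heD : e ∉ D := by
    rw [memD]; simp
  have hdisj : Disjoint (Γ.up e) L := Finset.disjoint_left.2 (fun {a} ha hal => by
    rw [hL, Finset.mem_sdiff] at hal
    exact hal.2 (Finset.mem_insert_of_mem ha))
  -- the difference of the up-sums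
  set F : E → ℝ := fun f => (∑ g ∈ Γ.up f, t f * t g) - (∑ g ∈ Γ'.up f, t f * t g) with hF
  have hF0 : ∀ f ∈ Finset.univ, f ∉ insert e D → F f = 0 := by
    intro f _ hf
    rw [Finset.mem_insert] at hf
    push_neg at hf
    obtain ⟨hfe, hfD⟩ := hf
    rw [memD] at hfD
    push_neg at hfD
    by_cases hin : Γ.inUp f e
    · have hfb : f = b := hfD hin hfe
      rw [hF]; simp only [hfb, upb, sub_self]
    · rw [hF]; simp only [upO f hin, sub_self]
  have hFe : F e = -(t e * ∑ g ∈ L, t g) := by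
    rw [hF]
    simp only [upe, Finset.sum_union hdisj, ← Finset.mul_sum]
    ring
  have hFD : ∀ f ∈ D, F f = t f * t e := by
    intro f hf
    obtain ⟨h1, _, _⟩ := (memD f).1 hf
    have hsub : {e} ⊆ Γ.up f := Finset.singleton_subset_iff.2 ((mem_up Γ f e).2 h1)
    rw [hF]
    simp only [upD f hf]
    rw [← Finset.sum_sdiff hsub]
    simp
  have key : (∑ f, ∑ g ∈ Γ.up f, t f * t g) - (∑ f, ∑ g ∈ Γ'.up f, t f * t g)
      = t e * ∑ f ∈ D \ L, t f := by
    rw [← Finset.sum_sub_distrib]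
    have : ∑ f, F f = ∑ f ∈ insert e D, F f :=
      (Finset.sum_subset (Finset.subset_univ _) hF0).symm
    rw [show (∑ f, ((∑ g ∈ Γ.up f, t f * t g) - ∑ g ∈ Γ'.up f, t f * t g)) = ∑ f, F f from rfl,
      this, Finset.sum_insert heD, hFe, Finset.sum_congr rfl hFD]
    rw [← Finset.sum_sdiff hLD, ← Finset.sum_mul, ← Finset.sum_mul]
    ring
  have expand : 2 * P2 Γ t - 2 * P2 Γ' t
      = (∑ f, ∑ g ∈ Γ.up f, t f * t g) - (∑ f, ∑ g ∈ Γ'.up f, t f * t g) := by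
    rw [P2, P2, hangEq]
    ring
  rw [expand, key]
end

section
/- Let Γ be a rooted tree with positive edge lengths t, let e be a non-hanging edge of Γ, and let b be a hanging edge that is a proper descendant of e. Set l = up(b) \ ({b} ∪ up(e)) and D = the set of proper descendants of e other than b, and let Γ' be obtained from Γ by the transformation T1 (delete e, attaching the subtrees below e's lower endpoint directly to e's upper endpoint, and re-insert e between b and its parent vertex, keeping edge lengths). Then P₂(Γ, t) ≥ P₂(Γ', t); moreover, if D \ l is nonempty, then P₂(Γ, t) > P₂(Γ', t). -/
namespace EdgeRootedTree
namespace T1Aux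

variable {E : Type*}

lemma rank_le {Γ : EdgeRootedTree E} {rank : E → ℕ}
    (hr : ∀ a b, Γ.par a = some b → rank b < rank a)
    {a b : E} (h : Γ.inUp a b) : rank b ≤ rank a := by
  induction h with
  | refl => exact le_rfl
  | tail _ hstep ih => exact le_trans (le_of_lt (hr _ _ hstep)) ih

lemma par_ne_self (Γ : EdgeRootedTree E) (a : E) : Γ.par a ≠ some a := by
  obtain ⟨rank, hr⟩ := Γ.wf
  intro h
  exact lt_irrefl _ (hr _ _ h)

lemma inUp_asymm {Γ : EdgeRootedTree E} {a b : E}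
    (h : Γ.inUp a b) (hne : a ≠ b) : ¬ Γ.inUp b a := by
  obtain ⟨rank, hr⟩ := Γ.wf
  rcases h.cases_head with rfl | ⟨c, hc, hcb⟩
  · exact absurd rfl hne
  · intro h2
    have h1 : rank b ≤ rank c := rank_le hr hcb
    have h3 : rank a ≤ rank b := rank_le hr h2
    have := hr _ _ hc
    omega

lemma not_inUp_parent {Γ : EdgeRootedTree E} {a p : E}
    (h : Γ.par a = some p) : ¬ Γ.inUp p a := by
  obtain ⟨rank, hr⟩ := Γ.wf
  intro h2
  have := rank_le hr h2
  have := hr _ _ h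
  omega

lemma eq_of_inUp_hanging {Γ : EdgeRootedTree E} {b x : E}
    (hb : Γ.IsHanging b) (h : Γ.inUp x b) : x = b := by
  rcases h.cases_tail with h | ⟨c, _, hc⟩
  · exact h.symm
  · exact absurd hc (hb c)

lemma inUp_total {Γ : EdgeRootedTree E} {a c d : E}
    (h1 : Γ.inUp a c) (h2 : Γ.inUp a d) : Γ.inUp c d ∨ Γ.inUp d c := by
  revert h2
  induction h1 using Relation.ReflTransGen.head_induction_on with
  | refl => exact fun h2 => Or.inl h2
  | head hstep htail ih =>
    intro h2
    rcases h2.cases_head with rfl | ⟨a', ha', h2'⟩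
    · exact Or.inr (Relation.ReflTransGen.head hstep htail)
    · rw [hstep] at ha'
      injection ha' with ha'
      exact ih (ha' ▸ h2')

lemma mem_up {Γ : EdgeRootedTree E} [Fintype E] {x f : E} : f ∈ Γ.up x ↔ Γ.inUp x f := by
  simp [up]

section T1

open scoped Classical

variable {Γ Γ' : EdgeRootedTree E} {e b : E}

lemma parb (hΓ' : Γ'.par = T1par Γ e b) : Γ'.par b = some e := by
  rw [hΓ']; simp [T1par]

lemma pare (hne : b ≠ e) (hΓ' : Γ'.par = T1par Γ e b) :
    Γ'.par e = if Γ.par b = some e then Γ.par e else Γ.par b := by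
  rw [hΓ']
  simp only [T1par]
  rw [if_neg (Ne.symm hne)]
  simp

lemma parother (hΓ' : Γ'.par = T1par Γ e b) {c : E} (h1 : c ≠ b) (h2 : c ≠ e) :
    Γ'.par c = if Γ.par c = some e then Γ.par e else Γ.par c := by
  rw [hΓ']
  simp only [T1par, if_neg h1, if_neg h2]

lemma samepar (hdesc : Γ.inUp b e) (hΓ' : Γ'.par = T1par Γ e b)
    {x c : E} (hx : ¬ Γ.inUp x e) (hc : Γ.inUp x c) : Γ'.par c = Γ.par c := by
  have hcb : c ≠ b := fun h => hx (Relation.ReflTransGen.trans (h ▸ hc) hdesc)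
  have hce : c ≠ e := fun h => hx (h ▸ hc)
  have hpc : Γ.par c ≠ some e := fun h => hx (Relation.ReflTransGen.tail hc h)
  rw [parother hΓ' hcb hce, if_neg hpc]

lemma lemA (hdesc : Γ.inUp b e) (hΓ' : Γ'.par = T1par Γ e b)
    {x : E} (hx : ¬ Γ.inUp x e) (f : E) : Γ'.inUp x f ↔ Γ.inUp x f := by
  constructor
  · intro h
    induction h with
    | refl => exact Relation.ReflTransGen.refl
    | tail h1 hstep ih =>
      rw [samepar hdesc hΓ' hx ih] at hstep
      exact Relation.ReflTransGen.tail ih hstep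
  · intro h
    induction h with
    | refl => exact Relation.ReflTransGen.refl
    | tail h1 hstep ih =>
      exact Relation.ReflTransGen.tail ih
        (by rw [samepar hdesc hΓ' hx h1]; exact hstep)

lemma lemD (hb : Γ.IsHanging b) (hΓ' : Γ'.par = T1par Γ e b)
    {x : E} (hxe : x ≠ e) (hxb : x ≠ b) (f : E) :
    Γ'.inUp x f ↔ (Γ.inUp x f ∧ f ≠ e) := by
  constructor
  · intro h
    induction h with
    | refl => exact ⟨Relation.ReflTransGen.refl, hxe⟩
    | @tail c d h1 hstep ih =>
      obtain ⟨hxc, hce⟩ := ih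
      have hcb : c ≠ b := fun hcb => hxb (eq_of_inUp_hanging hb (hcb ▸ hxc))
      rw [parother hΓ' hcb hce] at hstep
      by_cases hpc : Γ.par c = some e
      · rw [if_pos hpc] at hstep
        exact ⟨Relation.ReflTransGen.tail (Relation.ReflTransGen.tail hxc hpc) hstep,
          fun hde => par_ne_self Γ e (hde ▸ hstep)⟩
      · rw [if_neg hpc] at hstep
        exact ⟨Relation.ReflTransGen.tail hxc hstep, fun hde => hpc (hde ▸ hstep)⟩
  · rintro ⟨h, hfe⟩
    have key : ∀ g, Γ.inUp x g →
        (g ≠ e → Γ'.inUp x g) ∧ (g = e → ∀ p, Γ.par e = some p → Γ'.inUp x p) := by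
      intro g hg
      induction hg with
      | refl => exact ⟨fun _ => Relation.ReflTransGen.refl, fun hg' => absurd hg' hxe⟩
      | @tail c d h1 hstep ih =>
        by_cases hce : c = e
        · subst hce
          have hd : Γ'.inUp x d := ih.2 rfl d hstep
          exact ⟨fun _ => hd, fun hde => absurd (hde ▸ hstep) (par_ne_self Γ _)⟩
        · have hc' : Γ'.inUp x c := ih.1 hce
          have hcb : c ≠ b := fun hcb => hxb (eq_of_inUp_hanging hb (hcb ▸ h1))
          by_cases hde : d = e
          · subst hde
            refine ⟨fun h' => absurd rfl h', fun _ p hp => ?_⟩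
            have hpc : Γ'.par c = some p := by
              rw [parother hΓ' hcb hce, if_pos hstep]; exact hp
            exact Relation.ReflTransGen.tail hc' hpc
          · have hpc : Γ'.par c = some d := by
              rw [parother hΓ' hcb hce,
                if_neg (fun hh => hde (Option.some.inj (hstep.symm.trans hh)))]
              exact hstep
            exact ⟨fun _ => Relation.ReflTransGen.tail hc' hpc, fun h' => absurd h' hde⟩
    exact (key f h).1 hfe

lemma lemC (hb : Γ.IsHanging b) (hdesc : Γ.inUp b e) (hne : b ≠ e)
    (hΓ' : Γ'.par = T1par Γ e b) (f : E) :
    Γ'.inUp e f ↔ (f = e ∨ (Γ.inUp b f ∧ f ≠ b)) := by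
  have hpeb : Γ.par e ≠ some b :=
    fun h => (inUp_asymm hdesc hne) (Relation.ReflTransGen.single h)
  constructor
  · intro h
    induction h with
    | refl => exact Or.inl rfl
    | @tail c d h1 hstep ih =>
      by_cases hce : c = e
      · rw [hce] at hstep
        rw [pare hne hΓ'] at hstep
        by_cases hpb : Γ.par b = some e
        · rw [if_pos hpb] at hstep
          exact Or.inr ⟨Relation.ReflTransGen.tail hdesc hstep,
            fun hdb => hpeb (hdb ▸ hstep)⟩
        · rw [if_neg hpb] at hstep
          exact Or.inr ⟨Relation.ReflTransGen.single hstep,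
            fun hdb => par_ne_self Γ b (hdb ▸ hstep)⟩
      · rcases ih with rfl | ⟨hbc, hcb⟩
        · exact absurd rfl hce
        · rw [parother hΓ' hcb hce] at hstep
          by_cases hpc : Γ.par c = some e
          · rw [if_pos hpc] at hstep
            exact Or.inr ⟨Relation.ReflTransGen.tail
              (Relation.ReflTransGen.tail hbc hpc) hstep,
              fun hdb => hpeb (hdb ▸ hstep)⟩
          · rw [if_neg hpc] at hstep
            exact Or.inr ⟨Relation.ReflTransGen.tail hbc hstep,
              fun hdb => hb c (hdb ▸ hstep)⟩
  · rintro (rfl | ⟨hbf, hfb⟩)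
    · exact Relation.ReflTransGen.refl
    · rcases hbf.cases_head with rfl | ⟨c, hc, hcf⟩
      · exact absurd rfl hfb
      · by_cases hce : c = e
        · rw [hce] at hc hcf
          have hpe : Γ'.par e = Γ.par e := by rw [pare hne hΓ', if_pos hc]
          rcases hcf.cases_head with rfl | ⟨p, hp, hpf⟩
          · exact Relation.ReflTransGen.refl
          · have hnp : ¬ Γ.inUp p e := not_inUp_parent hp
            exact Relation.ReflTransGen.head (by rw [hpe]; exact hp)
              ((lemA hdesc hΓ' hnp f).2 hpf)
        · have hcD : Γ.inUp c e := by
            rcases hdesc.cases_head with h | ⟨c', hc', h'⟩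
            · exact absurd h.symm (Ne.symm hne)
            · rw [hc] at hc'
              injection hc' with hh
              exact hh ▸ h'
          have hcb2 : c ≠ b := fun h => par_ne_self Γ b (h ▸ hc)
          by_cases hfe : f = e
          · exact hfe ▸ Relation.ReflTransGen.refl
          · have hcf' : Γ'.inUp c f := (lemD hb hΓ' hce hcb2 f).2 ⟨hcf, hfe⟩
            have hpe : Γ'.par e = some c := by
              rw [pare hne hΓ',
                if_neg (fun h => hce (Option.some.inj (hc.symm.trans h)))]
              exact hc
            exact Relation.ReflTransGen.head hpe hcf'

lemma lemB (hb : Γ.IsHanging b) (hdesc : Γ.inUp b e) (hne : b ≠ e)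
    (hΓ' : Γ'.par = T1par Γ e b) (f : E) :
    Γ'.inUp b f ↔ Γ.inUp b f := by
  have hpb : Γ'.par b = some e := parb hΓ'
  constructor
  · intro h
    rcases h.cases_head with rfl | ⟨c, hc, hcf⟩
    · exact Relation.ReflTransGen.refl
    · rw [hpb] at hc
      injection hc with hc
      subst hc
      rcases (lemC hb hdesc hne hΓ' f).1 hcf with rfl | ⟨h1, _⟩
      · exact hdesc
      · exact h1
  · intro h
    by_cases hfb : f = b
    · exact hfb ▸ Relation.ReflTransGen.refl
    · exact Relation.ReflTransGen.head hpb
        ((lemC hb hdesc hne hΓ' f).2 (Or.inr ⟨h, hfb⟩))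

lemma hangEq (he : ¬ Γ.IsHanging e) (hne : b ≠ e)
    (hΓ' : Γ'.par = T1par Γ e b) (x : E) :
    Γ'.IsHanging x ↔ Γ.IsHanging x := by
  constructor
  · intro h f hf
    by_cases hxe : x = e
    · exact h b (by rw [parb hΓ', hxe])
    · by_cases hfb : f = b
      · subst hfb
        refine h e ?_
        rw [pare hne hΓ', if_neg (fun hh => hxe (Option.some.inj (hf.symm.trans hh)))]
        exact hf
      · by_cases hfe : f = e
        · rw [hfe] at hf
          obtain ⟨g, hg⟩ := not_forall.mp he
          rw [not_ne_iff] at hg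
          by_cases hgb : g = b
          · exact h e (by rw [pare hne hΓ', if_pos (hgb ▸ hg)]; exact hf)
          · have hge : g ≠ e := fun hh => par_ne_self Γ e (hh ▸ hg)
            exact h g (by rw [parother hΓ' hgb hge, if_pos hg]; exact hf)
        · refine h f ?_
          rw [parother hΓ' hfb hfe,
            if_neg (fun hh => hxe (Option.some.inj (hf.symm.trans hh)))]
          exact hf
  · intro h f hf
    by_cases hfb : f = b
    · subst hfb
      rw [parb hΓ'] at hf
      injection hf with hf
      exact he (hf ▸ h)
    · by_cases hfe : f = e
      · rw [hfe] at hf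
        rw [pare hne hΓ'] at hf
        by_cases hpb : Γ.par b = some e
        · rw [if_pos hpb] at hf; exact h e hf
        · rw [if_neg hpb] at hf; exact h b hf
      · rw [parother hΓ' hfb hfe] at hf
        by_cases hpc : Γ.par f = some e
        · rw [if_pos hpc] at hf; exact h e hf
        · rw [if_neg hpc] at hf; exact h f hf

end T1
end T1Aux
end EdgeRootedTree

open EdgeRootedTree in
open scoped Classical in
/-- Let `e` be a non-hanging edge of the rooted tree `Γ` and `b` a
hanging edge which is a proper descendant of `e`; let `l = up(b) \ ({b} ∪ up(e))` and
let `D` be the set of proper descendants of `e` other than `b`.  If `Γ'` is obtained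
from `Γ` by the transformation T1 (keeping the positive edge lengths `t`), then
`P₂(Γ,t) ≥ P₂(Γ',t)`, and moreover `P₂(Γ,t) > P₂(Γ',t)` as soon as `D \ l ≠ ∅`. -/
theorem T1_decreases_P2
    {E : Type*} [Fintype E] (Γ Γ' : EdgeRootedTree E) (t : E → ℝ)
    (ht : ∀ x, 0 < t x) (e b : E)
    (he : ¬ Γ.IsHanging e) (hb : Γ.IsHanging b)
    (hdesc : Γ.inUp b e) (hne : b ≠ e)
    (hΓ' : Γ'.par = T1par Γ e b) :
    P2 Γ' t ≤ P2 Γ t ∧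
      (((Finset.univ.filter fun f => Γ.inUp f e ∧ f ≠ e ∧ f ≠ b) \
          (Γ.up b \ insert b (Γ.up e))).Nonempty → P2 Γ' t < P2 Γ t) := by
  classical
  set Dset := (Finset.univ.filter fun f => Γ.inUp f e ∧ f ≠ e ∧ f ≠ b) with hDdef
  set lset := Γ.up b \ insert b (Γ.up e) with hldef
  have hH : Γ'.hanging = Γ.hanging := by
    ext x
    simp only [hanging, Finset.mem_filter, Finset.mem_univ, true_and]
    exact T1Aux.hangEq he hne hΓ' x
  have hA : ∀ x, ¬ Γ.inUp x e → Γ'.up x = Γ.up x := by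
    intro x hx
    ext f
    rw [T1Aux.mem_up, T1Aux.mem_up]
    exact T1Aux.lemA hdesc hΓ' hx f
  have hB : Γ'.up b = Γ.up b := by
    ext f; rw [T1Aux.mem_up, T1Aux.mem_up]; exact T1Aux.lemB hb hdesc hne hΓ' f
  have hbub : b ∈ Γ.up b := T1Aux.mem_up.2 Relation.ReflTransGen.refl
  have hbue : b ∉ Γ.up e := fun h => (T1Aux.inUp_asymm hdesc hne) (T1Aux.mem_up.1 h)
  have hCset : Γ'.up e = (Γ.up b).erase b := by
    ext f
    rw [Finset.mem_erase, T1Aux.mem_up, T1Aux.mem_up, T1Aux.lemC hb hdesc hne hΓ' f]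
    constructor
    · rintro (rfl | ⟨h1, h2⟩)
      · exact ⟨Ne.symm hne, hdesc⟩
      · exact ⟨h2, h1⟩
    · rintro ⟨h2, h1⟩
      exact Or.inr ⟨h1, h2⟩
  have hDup : ∀ x ∈ Dset, Γ'.up x = (Γ.up x).erase e := by
    intro x hx
    rw [hDdef, Finset.mem_filter] at hx
    obtain ⟨_, hxue, hxe, hxb⟩ := hx
    ext f
    rw [Finset.mem_erase, T1Aux.mem_up, T1Aux.mem_up, T1Aux.lemD hb hΓ' hxe hxb f]
    tauto
  have heD : e ∉ Dset := by simp [hDdef]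
  have heup : ∀ x ∈ Dset, e ∈ Γ.up x := by
    intro x hx
    rw [hDdef, Finset.mem_filter] at hx
    exact T1Aux.mem_up.2 hx.2.1
  have hsubl : lset ⊆ Dset := by
    intro f hf
    rw [hldef, Finset.mem_sdiff, Finset.mem_insert] at hf
    obtain ⟨h1, h2⟩ := hf
    push_neg at h2
    obtain ⟨hfb, hfe'⟩ := h2
    have hbf : Γ.inUp b f := T1Aux.mem_up.1 h1
    have hfue : ¬ Γ.inUp e f := fun h => hfe' (T1Aux.mem_up.2 h)
    rcases T1Aux.inUp_total hbf hdesc with h | h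
    · rw [hDdef, Finset.mem_filter]
      exact ⟨Finset.mem_univ f, h,
        fun hfe => hfue (by rw [hfe]; exact Relation.ReflTransGen.refl), hfb⟩
    · exact absurd h hfue
  have hins : insert b (Γ.up e) ⊆ Γ.up b := by
    intro f hf
    rcases Finset.mem_insert.1 hf with rfl | hf
    · exact hbub
    · exact T1Aux.mem_up.2 (Relation.ReflTransGen.trans hdesc (T1Aux.mem_up.1 hf))
  have hls : ∑ f ∈ lset, t f
      = ∑ f ∈ Γ.up b, t f - (t b + ∑ f ∈ Γ.up e, t f) := by
    rw [hldef, Finset.sum_sdiff_eq_sub hins, Finset.sum_insert hbue]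
  have hDl : ∑ f ∈ Dset \ lset, t f = ∑ f ∈ Dset, t f - ∑ f ∈ lset, t f :=
    Finset.sum_sdiff_eq_sub hsubl
  have hzero : ∀ x ∈ Finset.univ, x ∉ insert e Dset →
      (∑ f ∈ Γ.up x, t x * t f) - (∑ f ∈ Γ'.up x, t x * t f) = 0 := by
    intro x _ hx
    rw [Finset.mem_insert] at hx
    push_neg at hx
    obtain ⟨hxe, hxD⟩ := hx
    by_cases hxb : x = b
    · rw [hxb, hB]
      exact sub_self _
    · by_cases hxinup : Γ.inUp x e
      · exact absurd (by
          rw [hDdef]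
          exact Finset.mem_filter.2 ⟨Finset.mem_univ x, hxinup, hxe, hxb⟩) hxD
      · rw [hA x hxinup]
        exact sub_self _
  have hkey : (∑ x, ∑ f ∈ Γ.up x, t x * t f) - (∑ x, ∑ f ∈ Γ'.up x, t x * t f)
      = t e * ∑ f ∈ Dset \ lset, t f := by
    rw [← Finset.sum_sub_distrib,
      ← Finset.sum_subset (Finset.subset_univ (insert e Dset)) hzero,
      Finset.sum_insert heD]
    have h1 : (∑ f ∈ Γ.up e, t e * t f) - (∑ f ∈ Γ'.up e, t e * t f)
        = t e * (∑ f ∈ Γ.up e, t f) - (t e * (∑ f ∈ Γ.up b, t f) - t e * t b) := by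
      rw [hCset, Finset.sum_erase_eq_sub hbub, ← Finset.mul_sum, ← Finset.mul_sum]
    have h2 : ∑ x ∈ Dset, ((∑ f ∈ Γ.up x, t x * t f) - (∑ f ∈ Γ'.up x, t x * t f))
        = (∑ x ∈ Dset, t x) * t e := by
      rw [Finset.sum_mul]
      refine Finset.sum_congr rfl fun x hx => ?_
      rw [hDup x hx, Finset.sum_erase_eq_sub (heup x hx)]
      ring
    rw [h1, h2, hDl, hls]
    ring
  have hdiff : P2 Γ t - P2 Γ' t = (t e * ∑ f ∈ Dset \ lset, t f) / 2 := by
    rw [← hkey]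
    simp only [P2, hH]
    ring
  have hnn : 0 ≤ t e * ∑ f ∈ Dset \ lset, t f :=
    mul_nonneg (ht e).le (Finset.sum_nonneg fun i _ => (ht i).le)
  constructor
  · linarith
  · intro hne'
    have h1 : 0 < ∑ f ∈ Dset \ lset, t f := Finset.sum_pos (fun i _ => ht i) hne'
    have h2 := mul_pos (ht e) h1
    linarith
end

section
/- Let Γ be a rooted tree with positive edge lengths t, let b be a hanging edge incident to a vertex v, and let d be another edge incident to v lying below v (a child edge at v, d ≠ b). Let D denote the set consisting of d together with all descendants of d, and let Γ' be obtained from Γ by the transformation T2: detach the subtree spanned by D from v and reattach it at the leaf endpoint of b, keeping all edge lengths. Then 2·P₂(Γ, t) − 2·P₂(Γ', t) = −t_b · Σ_{e∈D} t_e + t_b² + 2·t_b · Σ_{e∈E, e≠b} t_e. -/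
namespace EdgeRootedTree

variable {E : Type*}

open scoped Classical in
/-- The parent function of the tree obtained from `Γ` by the transformation **T2**:
the subtree consisting of the edge `d` and all its descendants is detached from the
common upper vertex of `b` and `d` and reattached at the leaf endpoint of the hanging
edge `b`. -/
noncomputable def T2par (Γ : EdgeRootedTree E) (b d : E) : E → Option E := fun f =>
  if f = d then some b else Γ.par f

end EdgeRootedTree

namespace EdgeRootedTree

variable {E : Type*}

private lemma rank_le {Γ : EdgeRootedTree E} {rank : E → ℕ}
    (hr : ∀ a b, Γ.par a = some b → rank b < rank a) {e f : E}
    (h : Γ.inUp e f) : rank f ≤ rank e := by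
  induction h with
  | refl => exact le_rfl
  | tail _ h2 ih => exact (hr _ _ h2).le.trans ih

private lemma not_inUp_b_d {Γ : EdgeRootedTree E} {b d : E}
    (hd : Γ.par d = Γ.par b) (hne : d ≠ b) : ¬ Γ.inUp b d := by
  obtain ⟨rank, hr⟩ := Γ.wf
  intro h
  rcases Relation.ReflTransGen.cases_head h with h1 | ⟨c, hc, hcd⟩
  · exact hne h1.symm
  · exact (hr _ _ (hd.trans hc)).not_ge (rank_le hr hcd)

private lemma inUp_hanging {Γ : EdgeRootedTree E} {b e : E}
    (hb : Γ.IsHanging b) (h : Γ.inUp e b) : e = b := by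
  rcases Relation.ReflTransGen.cases_tail h with h1 | ⟨c, _, hc⟩
  · exact h1.symm
  · exact absurd hc (hb c)

private lemma T2par_apply_d {Γ Γ' : EdgeRootedTree E} {b d : E}
    (hΓ' : Γ'.par = T2par Γ b d) : Γ'.par d = some b := by
  simp [hΓ', T2par]

private lemma T2par_apply_ne {Γ Γ' : EdgeRootedTree E} {b d : E}
    (hΓ' : Γ'.par = T2par Γ b d) {x : E} (hx : x ≠ d) : Γ'.par x = Γ.par x := by
  simp [hΓ', T2par, hx]

private lemma inUp_mono {Γ Γ' : EdgeRootedTree E} {b d : E}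
    (hd : Γ.par d = Γ.par b) (hne : d ≠ b) (hΓ' : Γ'.par = T2par Γ b d)
    {e f : E} (h : Γ.inUp e f) : Γ'.inUp e f := by
  induction h using Relation.ReflTransGen.head_induction_on with
  | refl => exact Relation.ReflTransGen.refl
  | head h1 h2 ih =>
    rename_i x c
    by_cases hx : x = d
    · subst hx
      have hpb : Γ'.par b = some c := by
        rw [T2par_apply_ne hΓ' (Ne.symm hne), ← hd]; exact h1
      exact Relation.ReflTransGen.head (T2par_apply_d hΓ')
        (Relation.ReflTransGen.head hpb ih)
    · exact Relation.ReflTransGen.head ((T2par_apply_ne hΓ' hx).trans h1) ih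

private lemma inUp_T2 {Γ Γ' : EdgeRootedTree E} {b d : E}
    (hd : Γ.par d = Γ.par b) (hne : d ≠ b) (hΓ' : Γ'.par = T2par Γ b d)
    {e f : E} (h : Γ'.inUp e f) :
    Γ.inUp e f ∨ (Γ.inUp e d ∧ f = b) := by
  induction h using Relation.ReflTransGen.head_induction_on with
  | refl => exact Or.inl Relation.ReflTransGen.refl
  | head h1 h2 ih =>
    rename_i x c
    by_cases hx : x = d
    · rw [hx] at h1 ⊢
      have hc : c = b := by
        have h3 : Γ'.par d = some b := T2par_apply_d hΓ'
        rw [h3] at h1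
        exact (Option.some.inj h1).symm
      subst hc
      rcases ih with ih | ⟨ihd, rfl⟩
      · rcases Relation.ReflTransGen.cases_head ih with h3 | ⟨p, hp, hpf⟩
        · exact Or.inr ⟨Relation.ReflTransGen.refl, h3.symm⟩
        · exact Or.inl (Relation.ReflTransGen.head (hd.trans hp) hpf)
      · exact absurd ihd (not_inUp_b_d hd hne)
    · have hpar : Γ.par x = some c := (T2par_apply_ne hΓ' hx).symm.trans h1
      rcases ih with ih | ⟨ihd, rfl⟩
      · exact Or.inl (Relation.ReflTransGen.head hpar ih)
      · exact Or.inr ⟨Relation.ReflTransGen.head hpar ihd, rfl⟩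

open scoped Classical in
private lemma up_T2 [Fintype E] {Γ Γ' : EdgeRootedTree E} {b d : E}
    (hd : Γ.par d = Γ.par b) (hne : d ≠ b) (hΓ' : Γ'.par = T2par Γ b d) (e : E) :
    Γ'.up e = if Γ.inUp e d then insert b (Γ.up e) else Γ.up e := by
  ext f
  split_ifs with h
  · simp only [up, Finset.mem_insert, Finset.mem_filter, Finset.mem_univ, true_and]
    constructor
    · intro hf
      rcases inUp_T2 hd hne hΓ' hf with h1 | ⟨_, rfl⟩
      · exact Or.inr h1
      · exact Or.inl rfl
    · rintro (rfl | hf)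
      · exact Relation.ReflTransGen.tail (inUp_mono hd hne hΓ' h) (T2par_apply_d hΓ')
      · exact inUp_mono hd hne hΓ' hf
  · simp only [up, Finset.mem_filter, Finset.mem_univ, true_and]
    constructor
    · intro hf
      rcases inUp_T2 hd hne hΓ' hf with h1 | ⟨h2, _⟩
      · exact h1
      · exact absurd h2 h
    · exact inUp_mono hd hne hΓ'

open scoped Classical in
private lemma hanging_T2 [Fintype E] {Γ Γ' : EdgeRootedTree E} {b d : E}
    (hb : Γ.IsHanging b) (hd : Γ.par d = Γ.par b) (hne : d ≠ b)
    (hΓ' : Γ'.par = T2par Γ b d) :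
    Γ'.hanging = Γ.hanging.erase b := by
  ext e
  simp only [hanging, Finset.mem_erase, Finset.mem_filter, Finset.mem_univ, true_and]
  constructor
  · intro h
    constructor
    · rintro rfl
      exact h d (T2par_apply_d hΓ')
    · intro f hf
      by_cases hfd : f = d
      · subst hfd
        have : Γ.par b = some e := hd ▸ hf
        exact h b ((T2par_apply_ne hΓ' (Ne.symm hne)).trans this)
      · exact h f ((T2par_apply_ne hΓ' hfd).trans hf)
  · rintro ⟨heb, he⟩ f
    by_cases hfd : f = d
    · subst hfd
      rw [T2par_apply_d hΓ']
      exact fun hh => heb (Option.some.inj hh).symm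
    · rw [T2par_apply_ne hΓ' hfd]
      exact he f

end EdgeRootedTree

open EdgeRootedTree in
open scoped Classical in
/-- Let `b` be a hanging edge of the rooted tree `Γ` incident to a
vertex `v`, and let `d ≠ b` be a child edge at `v` (so `d` and `b` have the same parent).
Let `D` consist of `d` together with all its descendants.  If `Γ'` is obtained from `Γ`
by the transformation T2 (keeping the edge lengths), then
`2 P₂(Γ,t) - 2 P₂(Γ',t) = - t_b Σ_{e∈D} t_e + t_b² + 2 t_b Σ_{e≠b} t_e`. -/
theorem T2_P2_difference
    {E : Type*} [Fintype E] (Γ Γ' : EdgeRootedTree E) (t : E → ℝ)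
    (ht : ∀ x, 0 < t x) (b d : E)
    (hb : Γ.IsHanging b) (hd : Γ.par d = Γ.par b) (hne : d ≠ b)
    (hΓ' : Γ'.par = T2par Γ b d) :
    2 * P2 Γ t - 2 * P2 Γ' t =
      - (t b * ∑ e ∈ Finset.univ.filter fun f => Γ.inUp f d, t e)
        + t b ^ 2 + 2 * t b * ∑ e ∈ Finset.univ.erase b, t e := by
  have hbD : ¬ Γ.inUp b d := not_inUp_b_d hd hne
  have hbH : b ∈ Γ.hanging := by simp [hanging, hb]
  have hH : Γ'.hanging = Γ.hanging.erase b := hanging_T2 hb hd hne hΓ'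
  -- the up-sum identity
  have hups : ∑ e, ∑ f ∈ Γ'.up e, t e * t f =
      (∑ e, ∑ f ∈ Γ.up e, t e * t f)
        + (∑ e ∈ Finset.univ.filter fun f => Γ.inUp f d, t e) * t b := by
    have hterm : ∀ e : E, ∑ f ∈ Γ'.up e, t e * t f =
        (if Γ.inUp e d then t e * t b else 0) + ∑ f ∈ Γ.up e, t e * t f := by
      intro e
      rw [up_T2 hd hne hΓ' e]
      split_ifs with h
      · have hbnot : b ∉ Γ.up e := by
          simp only [up, Finset.mem_filter, Finset.mem_univ, true_and]
          intro hh
          exact hbD ((inUp_hanging hb hh) ▸ h)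
        rw [Finset.sum_insert hbnot]
      · rw [zero_add]
    calc ∑ e, ∑ f ∈ Γ'.up e, t e * t f
        = ∑ e, ((if Γ.inUp e d then t e * t b else 0) + ∑ f ∈ Γ.up e, t e * t f) := by
          exact Finset.sum_congr rfl fun e _ => hterm e
      _ = (∑ e, if Γ.inUp e d then t e * t b else 0) + ∑ e, ∑ f ∈ Γ.up e, t e * t f := by
          rw [Finset.sum_add_distrib]
      _ = (∑ e, ∑ f ∈ Γ.up e, t e * t f)
            + (∑ e ∈ Finset.univ.filter fun f => Γ.inUp f d, t e) * t b := by
          rw [← Finset.sum_filter, ← Finset.sum_mul]; ring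
  have hHsum : ∑ e ∈ Γ'.hanging, t e = (∑ e ∈ Γ.hanging, t e) - t b := by
    rw [hH, Finset.sum_erase_eq_sub hbH]
  have hHsq : ∑ e ∈ Γ'.hanging, t e ^ 2 = (∑ e ∈ Γ.hanging, t e ^ 2) - t b ^ 2 := by
    rw [hH, Finset.sum_erase_eq_sub hbH]
  have hEsum : ∑ e ∈ Finset.univ.erase b, t e = (∑ e, t e) - t b :=
    Finset.sum_erase_eq_sub (Finset.mem_univ b)
  simp only [P2]
  rw [hups, hHsum, hHsq, hEsum]
  ring
end

section
/- Let Γ be a rooted tree with positive edge lengths t, let b be a hanging edge incident to a vertex v, and let d ≠ b be a child edge at v, with D the set consisting of d together with all its descendants. If Γ' is obtained from Γ by the transformation T2 (detaching the subtree spanned by D from v and reattaching it at the leaf endpoint of b, keeping edge lengths), then P₂(Γ, t) > P₂(Γ', t). -/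
open EdgeRootedTree in
/-- Let `b` be a hanging edge of the rooted tree `Γ` incident to a
vertex `v`, and let `d ≠ b` be a child edge at `v` (so `d` and `b` have the same parent).
If `Γ'` is obtained from `Γ` by the transformation T2 (detaching the subtree spanned by
`d` and its descendants from `v` and reattaching it at the leaf endpoint of `b`, keeping
the positive edge lengths `t`), then `P₂(Γ,t) > P₂(Γ',t)`. -/
theorem T2_strictly_decreases_P2
    {E : Type*} [Fintype E] (Γ Γ' : EdgeRootedTree E) (t : E → ℝ)
    (ht : ∀ x, 0 < t x) (b d : E)
    (hb : Γ.IsHanging b) (hd : Γ.par d = Γ.par b) (hne : d ≠ b)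
    (hΓ' : Γ'.par = T2par Γ b d) :
    P2 Γ' t < P2 Γ t := by
  classical
  obtain ⟨rank, hr⟩ := Γ.wf
  -- basic facts about the modified parent function
  have hpd' : Γ'.par d = some b := by rw [hΓ']; simp [T2par]
  have hpne' : ∀ a, a ≠ d → Γ'.par a = Γ.par a := by
    intro a ha; rw [hΓ']; simp [T2par, ha]
  have hstep'_elim : ∀ a c, Γ'.par a = some c →
      (a = d ∧ c = b) ∨ (a ≠ d ∧ Γ.par a = some c) := by
    intro a c h
    by_cases had : a = d
    · subst had; rw [hpd'] at h
      exact Or.inl ⟨rfl, (Option.some.inj h).symm⟩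
    · rw [hpne' a had] at h; exact Or.inr ⟨had, h⟩
  -- rank decreases along ancestors
  have hrank : ∀ x y : E, Γ.inUp x y → rank y ≤ rank x := by
    intro x y h
    induction h with
    | refl => exact le_rfl
    | tail _ hstep ih => exact le_trans (hr _ _ hstep).le ih
  -- the only descendant of the hanging edge b is b itself
  have hdesc_b : ∀ e, Γ.inUp e b → e = b := by
    intro e h
    induction h using Relation.ReflTransGen.head_induction_on with
    | refl => rfl
    | head hac _ ih => exact absurd (ih ▸ hac) (hb _)
  -- b is not a descendant of d
  have hbd : ¬ Γ.inUp b d := by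
    intro h
    rcases Relation.ReflTransGen.cases_head h with h1 | ⟨c, hbc, hcd⟩
    · exact hne h1.symm
    · have h2 : Γ.par d = some c := hd.trans hbc
      exact absurd (hrank _ _ hcd) (not_le.mpr (hr _ _ h2))
  have hnotpd : ∀ c, Γ.par d = some c → ¬ Γ.inUp c d := by
    intro c hc h
    exact absurd (hrank _ _ h) (not_le.mpr (hr _ _ hc))
  -- L2 : descendants of d reach d also in Γ'
  have hL2 : ∀ e, Γ.inUp e d → Γ'.inUp e d := by
    intro e h
    induction h using Relation.ReflTransGen.head_induction_on with
    | refl => exact Relation.ReflTransGen.refl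
    | @head a c hac _ ih =>
      by_cases had : a = d
      · subst had; exact Relation.ReflTransGen.refl
      · exact Relation.ReflTransGen.head (by rw [hpne' a had]; exact hac) ih
  -- L3 : paths avoiding d are preserved
  have hL3 : ∀ x y, Γ.inUp x y → ¬ Γ.inUp x d → Γ'.inUp x y := by
    intro x y hxy
    induction hxy using Relation.ReflTransGen.head_induction_on with
    | refl => intro _; exact Relation.ReflTransGen.refl
    | @head a c hac hcy ih =>
      intro had
      have hand : a ≠ d := fun h => had (h ▸ Relation.ReflTransGen.refl)
      refine Relation.ReflTransGen.head (by rw [hpne' a hand]; exact hac) (ih ?_)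
      intro hcd; exact had (Relation.ReflTransGen.head hac hcd)
  -- L4 : paths ending below d are preserved
  have hL4 : ∀ e f, Γ.inUp e f → Γ.inUp f d → Γ'.inUp e f := by
    intro e f hef hfd
    induction hef using Relation.ReflTransGen.head_induction_on with
    | refl => exact Relation.ReflTransGen.refl
    | @head a c hac hcf ih =>
      by_cases had : a = d
      · subst had
        exact absurd ((hrank _ _ hfd).trans (hrank _ _ hcf))
          (not_le.mpr (hr _ _ hac))
      · exact Relation.ReflTransGen.head (by rw [hpne' a had]; exact hac) ih
  -- L5 : comparability of ancestors
  have hL5 : ∀ e f, Γ.inUp e d → Γ.inUp e f → Γ.inUp d f ∨ Γ.inUp f d := by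
    intro e f hed
    induction hed using Relation.ReflTransGen.head_induction_on with
    | refl => intro h; exact Or.inl h
    | @head a c hac hcd ih =>
      intro haf
      rcases Relation.ReflTransGen.cases_head haf with h1 | ⟨c', hac', hc'f⟩
      · exact Or.inr (h1 ▸ Relation.ReflTransGen.head hac hcd)
      · have hcc : c' = c := Option.some.inj (hac'.symm.trans hac)
        exact ih (hcc ▸ hc'f)
  -- L6 : paths in Γ' come from paths in Γ
  have hL6 : ∀ e f, Γ'.inUp e f → Γ.inUp e f ∨ (Γ.inUp e d ∧ Γ.inUp b f) := by
    intro e f h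
    induction h using Relation.ReflTransGen.head_induction_on with
    | refl => exact Or.inl Relation.ReflTransGen.refl
    | @head a c hac _ ih =>
      rcases hstep'_elim a c hac with ⟨had, hcb⟩ | ⟨had, hac0⟩
      · subst had; subst hcb
        rcases ih with h1 | ⟨h2, _⟩
        · exact Or.inr ⟨Relation.ReflTransGen.refl, h1⟩
        · exact absurd h2 hbd
      · rcases ih with h1 | ⟨h2, h3⟩
        · exact Or.inl (Relation.ReflTransGen.head hac0 h1)
        · exact Or.inr ⟨Relation.ReflTransGen.head hac0 h2, h3⟩
  have hbned : b ≠ d := fun h => hne h.symm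
  -- characterization of up-sets in Γ'
  have hupmem : ∀ e f, Γ'.inUp e f ↔ (Γ.inUp e d ∧ f = b) ∨ Γ.inUp e f := by
    intro e f
    constructor
    · intro h
      rcases hL6 e f h with h1 | ⟨h2, h3⟩
      · exact Or.inr h1
      · rcases Relation.ReflTransGen.cases_head h3 with h4 | ⟨c, hbc, hcf⟩
        · exact Or.inl ⟨h2, h4.symm⟩
        · exact Or.inr (Relation.ReflTransGen.trans h2
            (Relation.ReflTransGen.head (hd.trans hbc) hcf))
    · rintro (⟨hed, rfl⟩ | h)
      · exact Relation.ReflTransGen.tail (hL2 e hed) hpd'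
      · by_cases hed : Γ.inUp e d
        · rcases hL5 e f hed h with hdf | hfd
          · rcases Relation.ReflTransGen.cases_head hdf with h4 | ⟨c, hdc, hcf⟩
            · exact h4 ▸ hL2 e hed
            · have h5 : Γ'.inUp c f := hL3 c f hcf (hnotpd c hdc)
              have h6 : Γ'.par b = some c := by
                rw [hpne' b hbned, ← hd]; exact hdc
              exact Relation.ReflTransGen.trans
                (Relation.ReflTransGen.tail
                  (Relation.ReflTransGen.tail (hL2 e hed) hpd') h6) h5
          · exact hL4 e f h hfd
        · exact hL3 e f h hed
  -- up-sets
  have hup : ∀ e, Γ'.up e = if Γ.inUp e d then insert b (Γ.up e) else Γ.up e := by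
    intro e
    ext f
    by_cases hed : Γ.inUp e d
    · simp only [up, Finset.mem_filter, Finset.mem_univ, true_and, if_pos hed,
        Finset.mem_insert, hupmem]
      constructor
      · rintro (⟨_, rfl⟩ | h); exacts [Or.inl rfl, Or.inr h]
      · rintro (rfl | h); exacts [Or.inl ⟨hed, rfl⟩, Or.inr h]
    · simp only [up, Finset.mem_filter, Finset.mem_univ, true_and, if_neg hed,
        hupmem]
      constructor
      · rintro (⟨h, _⟩ | h); exacts [absurd h hed, h]
      · exact Or.inr
  -- hanging sets
  have hbH : b ∈ Γ.hanging := by simp [hanging]; exact hb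
  have hhang : Γ'.hanging = Γ.hanging.erase b := by
    ext e
    simp only [hanging, Finset.mem_filter, Finset.mem_univ, true_and,
      Finset.mem_erase, IsHanging]
    constructor
    · intro h
      constructor
      · rintro rfl; exact h d hpd'
      · intro f hf
        by_cases hfd : f = d
        · subst hfd
          exact h b (by rw [hpne' b hbned, ← hd]; exact hf)
        · exact h f (by rw [hpne' f hfd]; exact hf)
    · rintro ⟨heb, h⟩ f hf
      rcases hstep'_elim f e hf with ⟨_, hcb⟩ | ⟨_, hf0⟩
      · exact heb hcb
      · exact h f hf0
  -- b is not a descendant of d (as a Finset statement)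
  have hbD : b ∉ Finset.univ.filter (fun e => Γ.inUp e d) := by
    simp only [Finset.mem_filter, Finset.mem_univ, true_and]; exact hbd
  -- sum over up-sets
  have hupsum : ∑ e, ∑ f ∈ Γ'.up e, t e * t f
      = (∑ e, ∑ f ∈ Γ.up e, t e * t f)
        + (∑ e ∈ Finset.univ.filter (fun e => Γ.inUp e d), t e) * t b := by
    have key : ∀ e, ∑ f ∈ Γ'.up e, t e * t f
        = (∑ f ∈ Γ.up e, t e * t f) + (if Γ.inUp e d then t e * t b else 0) := by
      intro e
      rw [hup e]
      split_ifs with h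
      · have hbnot : b ∉ Γ.up e := by
          simp only [up, Finset.mem_filter, Finset.mem_univ, true_and]
          intro hbmem
          exact hbd (hdesc_b e hbmem ▸ h)
        rw [Finset.sum_insert hbnot]; ring
      · simp
    rw [Finset.sum_congr rfl (fun e _ => key e), Finset.sum_add_distrib]
    congr 1
    rw [← Finset.sum_filter, ← Finset.sum_mul]
  -- sums over hanging edges
  have hhsum1 : ∑ e ∈ Γ'.hanging, t e = (∑ e ∈ Γ.hanging, t e) - t b := by
    rw [hhang, Finset.sum_erase_eq_sub hbH]
  have hhsum2 : ∑ e ∈ Γ'.hanging, t e ^ 2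
      = (∑ e ∈ Γ.hanging, t e ^ 2) - t b ^ 2 := by
    rw [hhang, Finset.sum_erase_eq_sub hbH]
  -- size estimates
  have hDS : (∑ e ∈ Finset.univ.filter (fun e => Γ.inUp e d), t e) + t b
      ≤ ∑ e, t e := by
    have hsub : insert b (Finset.univ.filter (fun e => Γ.inUp e d)) ⊆
        Finset.univ := Finset.subset_univ _
    have := Finset.sum_le_sum_of_subset_of_nonneg hsub
      (fun i _ _ => (ht i).le)
    rw [Finset.sum_insert hbD] at this
    linarith
  have hbS : t b ≤ ∑ e, t e :=
    Finset.single_le_sum (fun i _ => (ht i).le) (Finset.mem_univ b)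
  have htb := ht b
  -- final computation
  simp only [P2]
  rw [hupsum, hhsum1, hhsum2]
  nlinarith [mul_le_mul_of_nonneg_left hDS htb.le,
    mul_le_mul_of_nonneg_left hbS htb.le, mul_pos htb htb]
end

section
/- Let k ≥ 1 and let l₁, …, l_k be positive integers with l₁ + ⋯ + l_k = n, and let Γ_{l₁,…,l_k} be the rooted tree that is the union of k simple chains of l₁, …, l_k edges emanating from the root. Then, evaluating the asymmetric part T_Γ of 2·P₂ with all edge lengths equal to x > 0, one has T_{Γ_{l₁,…,l_k}}(x, …, x) = x² · [ (l₁² + ⋯ + l_k²)/2 + k·(2n − 1) + n/2 ]. -/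
namespace EdgeRootedTree

/-- The asymmetric part `T_Γ` of `2 P₂`:
`T_Γ(t) = -Σ_H t² + 2 (Σ_H t)(Σ_E t) + Σ_{e∈E} Σ_{f∈up(e)} t_e t_f`. -/
noncomputable def Tasym {E : Type*} [Fintype E] (Γ : EdgeRootedTree E) (t : E → ℝ) : ℝ :=
  -∑ e ∈ Γ.hanging, t e ^ 2 + 2 * (∑ e ∈ Γ.hanging, t e) * (∑ e, t e)
    + ∑ e, ∑ f ∈ Γ.up e, t e * t f

/-- The rooted tree `Γ_{l₁,…,l_k}` that is the union of `k` simple chains with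
`l 0, …, l (k-1)` edges respectively, all emanating from the root: the edges are the
pairs `⟨i, j⟩` (`j`-th edge of the `i`-th chain, counted from the root), and the parent
of `⟨i, j⟩` is `⟨i, j-1⟩` for `j > 0`, while edges `⟨i, 0⟩` are incident to the root. -/
def starOfChains (k : ℕ) (l : Fin k → ℕ) : EdgeRootedTree (Σ i : Fin k, Fin (l i)) where
  par := fun p =>
    if h : (p.2 : ℕ) = 0 then none
    else some ⟨p.1, ⟨(p.2 : ℕ) - 1, lt_of_le_of_lt (Nat.pred_le _) p.2.isLt⟩⟩
  wf := by
    refine ⟨fun p => (p.2 : ℕ), ?_⟩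
    rintro ⟨i, j⟩ b h
    dsimp only at h
    split at h
    · exact absurd h (by simp)
    · rename_i hj
      obtain rfl := (Option.some.injEq _ _ ▸ h).symm
      exact Nat.sub_lt (Nat.pos_of_ne_zero hj) one_pos

end EdgeRootedTree

namespace StarAux

open EdgeRootedTree

variable {k : ℕ} {l : Fin k → ℕ}

lemma star_par_eq (i : Fin k) (j : Fin (l i)) (hj : (j : ℕ) ≠ 0) :
    (starOfChains k l).par ⟨i, j⟩ =
      some ⟨i, ⟨(j : ℕ) - 1, lt_of_le_of_lt (Nat.pred_le _) j.isLt⟩⟩ := by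
  simp [starOfChains, hj]

lemma star_par_eq_some {p q : Σ i : Fin k, Fin (l i)}
    (h : (starOfChains k l).par p = some q) :
    (p.2 : ℕ) ≠ 0 ∧ q.1 = p.1 ∧ (q.2 : ℕ) = (p.2 : ℕ) - 1 := by
  unfold starOfChains at h
  dsimp only at h
  split at h
  · simp at h
  · rename_i hj
    obtain rfl := Option.some.inj h
    exact ⟨hj, rfl, rfl⟩

lemma star_chain (i : Fin k) :
    ∀ d (j j' : Fin (l i)), (j' : ℕ) + d = j →
      (starOfChains k l).inUp ⟨i, j⟩ ⟨i, j'⟩ := by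
  intro d
  induction d with
  | zero =>
    intro j j' h
    have : j' = j := Fin.ext (by omega)
    subst this
    exact Relation.ReflTransGen.refl
  | succ d ih =>
    intro j j' h
    have hj : (j : ℕ) ≠ 0 := by omega
    refine Relation.ReflTransGen.head (star_par_eq i j hj) (ih _ j' ?_)
    simp only [Fin.val_mk]
    omega

lemma star_inUp_iff {i : Fin k} {j : Fin (l i)} {q : Σ i : Fin k, Fin (l i)} :
    (starOfChains k l).inUp ⟨i, j⟩ q ↔ q.1 = i ∧ (q.2 : ℕ) ≤ (j : ℕ) := by
  constructor
  · intro h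
    induction h with
    | refl => exact ⟨rfl, le_refl _⟩
    | tail _ hbc ih =>
      obtain ⟨h1, h2, h3⟩ := star_par_eq_some hbc
      exact ⟨h2.trans ih.1, by omega⟩
  · rintro ⟨h1, h2⟩
    obtain ⟨i', j'⟩ := q
    subst h1
    have h2' : (j' : ℕ) ≤ (j : ℕ) := h2
    exact star_chain _ ((j : ℕ) - (j' : ℕ)) j j' (by omega)

open scoped Classical in
lemma card_up (i : Fin k) (j : Fin (l i)) :
    ((starOfChains k l).up ⟨i, j⟩).card = (j : ℕ) + 1 := by
  rw [show ((starOfChains k l).up ⟨i, j⟩).card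
      = (Finset.range ((j : ℕ) + 1)).card from ?_, Finset.card_range]
  refine Finset.card_nbij' (fun e => (e.2 : ℕ))
    (fun m => ⟨i, ⟨min m (j : ℕ), lt_of_le_of_lt (min_le_right _ _) j.isLt⟩⟩)
    ?_ ?_ ?_ ?_
  · intro a ha
    simp only [Finset.mem_coe, up, Finset.mem_filter, Finset.mem_univ, true_and] at ha
    rw [star_inUp_iff] at ha
    simp only [Finset.mem_coe, Finset.mem_range]
    omega
  · intro m hm
    simp only [Finset.mem_coe, Finset.mem_range] at hm
    simp only [Finset.mem_coe, up, Finset.mem_filter, Finset.mem_univ, true_and]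
    rw [star_inUp_iff]
    exact ⟨rfl, by simp⟩
  · intro a ha
    simp only [Finset.mem_coe, up, Finset.mem_filter, Finset.mem_univ, true_and] at ha
    rw [star_inUp_iff] at ha
    obtain ⟨i', j'⟩ := a
    obtain ⟨rfl, h2⟩ := ha
    have h2' : (j' : ℕ) ≤ (j : ℕ) := h2
    exact Sigma.ext rfl (heq_of_eq (Fin.ext (by simp; omega)))
  · intro m hm
    simp only [Finset.mem_coe, Finset.mem_range] at hm
    simp only [Fin.val_mk]
    omega

lemma star_isHanging_iff (hl : ∀ i, 1 ≤ l i) {p : Σ i : Fin k, Fin (l i)} :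
    (starOfChains k l).IsHanging p ↔ (p.2 : ℕ) + 1 = l p.1 := by
  obtain ⟨i, j⟩ := p
  constructor
  · intro h
    by_contra hne
    have hlt : (j : ℕ) + 1 < l i := by have := j.isLt; simp at hne ⊢; omega
    refine h ⟨i, ⟨(j : ℕ) + 1, hlt⟩⟩ ?_
    rw [star_par_eq i ⟨(j : ℕ) + 1, hlt⟩ (by simp)]
    exact congrArg some (Sigma.ext rfl (heq_of_eq (Fin.ext (by simp))))
  · intro h f hf
    obtain ⟨h1, h2, h3⟩ := star_par_eq_some hf
    obtain ⟨i', j'⟩ := f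
    simp only at h1 h2 h3
    cases h2
    have := j'.isLt
    simp only at h h3 ⊢
    omega

open scoped Classical in
lemma card_hanging (hl : ∀ i, 1 ≤ l i) :
    ((starOfChains k l).hanging).card = k := by
  rw [show ((starOfChains k l).hanging).card
      = (Finset.univ : Finset (Fin k)).card from ?_, Finset.card_univ, Fintype.card_fin]
  refine Finset.card_nbij' (fun e => e.1)
    (fun i => ⟨i, ⟨l i - 1, by have := hl i; omega⟩⟩) ?_ ?_ ?_ ?_
  · intro a _; exact Finset.mem_univ _
  · intro i _
    simp only [Finset.mem_coe, hanging, Finset.mem_filter, Finset.mem_univ, true_and]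
    rw [star_isHanging_iff hl]
    have := hl i
    simp only [Fin.val_mk]
    omega
  · intro a ha
    simp only [Finset.mem_coe, hanging, Finset.mem_filter, Finset.mem_univ, true_and] at ha
    rw [star_isHanging_iff hl] at ha
    obtain ⟨i, j⟩ := a
    exact Sigma.ext rfl (heq_of_eq (Fin.ext (by simp at ha ⊢; omega)))
  · intro i _; rfl

lemma gauss (m : ℕ) : ∑ j : Fin m, ((j : ℝ) + 1) = ((m : ℝ) ^ 2 + m) / 2 := by
  induction m with
  | zero => simp
  | succ m ih =>
    rw [Fin.sum_univ_castSucc]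
    simp only [Fin.coe_castSucc, Fin.val_last, ih]
    push_cast
    ring

end StarAux

open EdgeRootedTree in
/-- For `k ≥ 1` and positive chain lengths `l₁,…,l_k` summing to `n`,
evaluating the asymmetric part `T_Γ` of `2 P₂` for the star of chains `Γ_{l₁,…,l_k}`
at equal edge lengths `x > 0` gives
`T(x,…,x) = x² ((l₁²+⋯+l_k²)/2 + k (2n-1) + n/2)`. -/
theorem Tasym_starOfChains
    (k : ℕ) (hk : 1 ≤ k) (l : Fin k → ℕ) (hl : ∀ i, 1 ≤ l i)
    (n : ℕ) (hn : ∑ i, l i = n) (x : ℝ) (hx : 0 < x) :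
    Tasym (starOfChains k l) (fun _ => x) =
      x ^ 2 * ((∑ i, (l i : ℝ) ^ 2) / 2 + k * (2 * n - 1) + n / 2) := by
  classical
  have hsum : ∑ i, (l i : ℝ) = n := by
    rw [← hn]; push_cast; rfl
  have hcard : (Finset.univ : Finset (Σ i : Fin k, Fin (l i))).card = n := by
    rw [Finset.card_univ, Fintype.card_sigma]
    simp [hn]
  have hup : ∀ e : Σ i : Fin k, Fin (l i),
      ∑ _f ∈ (starOfChains k l).up e, x * x = ((e.2 : ℝ) + 1) * (x * x) := by
    rintro ⟨i, j⟩
    rw [Finset.sum_const, StarAux.card_up, nsmul_eq_mul]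
    push_cast
    ring
  have hmain : (∑ e : Σ i : Fin k, Fin (l i), ∑ _f ∈ (starOfChains k l).up e, x * x)
      = (((∑ i, (l i : ℝ) ^ 2) + n) / 2) * (x * x) := by
    simp only [hup]
    rw [← Finset.univ_sigma_univ, Finset.sum_sigma]
    dsimp only
    simp only [← Finset.sum_mul]
    congr 1
    simp only [StarAux.gauss]
    rw [← Finset.sum_div, Finset.sum_add_distrib, hsum]
  unfold Tasym
  simp only
  rw [hmain, Finset.sum_const, Finset.sum_const, Finset.sum_const,
    StarAux.card_hanging hl, hcard, nsmul_eq_mul, nsmul_eq_mul, nsmul_eq_mul]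
  ring
end

section
/- For every integer d ≥ 2 there exists N such that for all n ≥ N the following holds: for every k with 1 ≤ k < d and every partition of n into k positive integer parts l₁, …, l_k, the quantity f(l₁,…,l_k) = (l₁² + ⋯ + l_k²)/2 + k·(2n − 1) + n/2 is strictly greater than the minimum of f(m₁,…,m_d) over all partitions of n into d positive integer parts m₁, …, m_d. Consequently, among the star-of-chains graphs Γ_{l₁,…,l_k} with n edges of equal length and at most d chains, no graph with fewer than d chains minimizes T_Γ evaluated at equal edge lengths. -/
private lemma aux_poly (x y : ℝ) (hx : 2 ≤ x) (hy : 1 ≤ y) :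
    (x - 1) * x ^ 2 + 2 * x * (x - 1) ^ 2 * (2 * y - 1) < 8 * x ^ 3 * y := by
  have hm1 : 2 * y * x ^ 2 ≤ y * x ^ 3 := by
    nlinarith [mul_nonneg (mul_nonneg (by linarith : (0:ℝ) ≤ y) (sq_nonneg x))
      (by linarith : (0:ℝ) ≤ x - 2)]
  have hm2 : x ^ 2 ≤ y * x ^ 2 := by
    nlinarith [mul_nonneg (by linarith : (0:ℝ) ≤ y - 1) (sq_nonneg x)]
  have hm3 : y * x ≤ y * x ^ 2 := by
    nlinarith [mul_nonneg (mul_nonneg (by linarith : (0:ℝ) ≤ y) (by linarith : (0:ℝ) ≤ x))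
      (by linarith : (0:ℝ) ≤ x - 1)]
  have hm4 : 2 * x ^ 2 ≤ x ^ 3 := by
    nlinarith [mul_nonneg (sq_nonneg x) (by linarith : (0:ℝ) ≤ x - 2)]
  nlinarith [hm1, hm2, hm3, hm4]

private lemma aux_C (x y : ℝ) (hy : 0 ≤ y) (h : 8 * x ^ 3 ≤ y) : 8 * x ^ 3 * y ≤ y ^ 2 := by
  nlinarith [mul_le_mul_of_nonneg_right h hy]

/-- For every `d ≥ 2` there is `N` such that for all `n ≥ N`:
for every `k` with `1 ≤ k < d` and every partition of `n` into `k` positive parts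
`l₁,…,l_k`, the quantity `f(l) = (l₁²+⋯+l_k²)/2 + k(2n-1) + n/2` (which is the value of
the asymmetric part `T_Γ` of `2 P₂` for the star of chains `Γ_{l₁,…,l_k}` at unit edge
lengths) is strictly greater than the minimum of `f(m)` over all partitions
`m₁,…,m_d` of `n` into `d` positive parts; i.e. some partition of `n` into `d` positive
parts has strictly smaller `f`-value.  Consequently no star of chains with fewer than
`d` chains minimizes `T_Γ` at equal edge lengths. -/
theorem few_chains_not_minimal (d : ℕ) (hd : 2 ≤ d) :
    ∃ N : ℕ, ∀ n ≥ N, ∀ k : ℕ, 1 ≤ k → k < d →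
      ∀ l : Fin k → ℕ, (∀ i, 1 ≤ l i) → ∑ i, l i = n →
        ∃ m : Fin d → ℕ, (∀ i, 1 ≤ m i) ∧ ∑ i, m i = n ∧
          (∑ i, (m i : ℝ) ^ 2) / 2 + d * (2 * n - 1) + n / 2 <
            (∑ i, (l i : ℝ) ^ 2) / 2 + k * (2 * n - 1) + n / 2 := by
  refine ⟨8 * d ^ 3, fun n hn k hk1 hkd l hl hsum => ?_⟩
  set q := n / d with hq
  set r := n % d with hr
  have hd0 : 0 < d := by omega
  have hrd : r < d := Nat.mod_lt _ hd0
  have hd3 : d ≤ d ^ 3 := Nat.le_self_pow (by norm_num) d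
  have hnd : d ≤ n := by omega
  have hq1 : 1 ≤ q := (Nat.one_le_div_iff hd0).2 hnd
  have hdiv : d * q + r = n := Nat.div_add_mod n d
  have hfil : (Finset.range d).filter (· < r) = Finset.range r := by
    ext x; simp only [Finset.mem_filter, Finset.mem_range]; omega
  refine ⟨fun i => if i.val < r then q + 1 else q, fun i => by dsimp; split <;> omega, ?_, ?_⟩
  · rw [Fin.sum_univ_eq_sum_range (fun x => if x < r then q + 1 else q)]
    have h1 : ∀ x, (if x < r then q + 1 else q) = q + (if x < r then 1 else 0) := by
      intro x; split <;> omega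
    simp_rw [h1]
    rw [Finset.sum_add_distrib, Finset.sum_const, ← Finset.sum_filter, hfil,
      Finset.sum_const, Finset.card_range, Finset.card_range]
    simp only [smul_eq_mul, mul_one]
    omega
  · have hSm : ∑ i : Fin d, ((if (i : ℕ) < r then q + 1 else q : ℕ) : ℝ) ^ 2
        = d * q ^ 2 + r * (2 * q + 1) := by
      rw [Fin.sum_univ_eq_sum_range (fun x => ((if x < r then q + 1 else q : ℕ) : ℝ) ^ 2)]
      have h1 : ∀ x, ((if x < r then q + 1 else q : ℕ) : ℝ) ^ 2
          = (q : ℝ) ^ 2 + (if x < r then (2 * (q : ℝ) + 1) else 0) := by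
        intro x; split <;> push_cast <;> ring
      simp_rw [h1]
      rw [Finset.sum_add_distrib, Finset.sum_const, ← Finset.sum_filter, hfil,
        Finset.sum_const, Finset.card_range, Finset.card_range]
      ring
    rw [hSm]
    -- Cauchy–Schwarz lower bound on ∑ l i ^ 2
    have hCS : ((n : ℝ)) ^ 2 ≤ (k : ℝ) * ∑ i, (l i : ℝ) ^ 2 := by
      have := sq_sum_le_card_mul_sum_sq (s := (Finset.univ : Finset (Fin k)))
        (f := fun i => (l i : ℝ))
      simpa [Finset.card_univ, ← hsum, Nat.cast_sum] using this
    have hSl0 : (0 : ℝ) ≤ ∑ i, (l i : ℝ) ^ 2 := by positivity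
    have hk' : (k : ℝ) ≤ (d : ℝ) - 1 := by
      have : (k : ℝ) + 1 ≤ d := by exact_mod_cast hkd
      linarith
    have h1 : ((n : ℝ)) ^ 2 ≤ ((d : ℝ) - 1) * ∑ i, (l i : ℝ) ^ 2 :=
      le_trans hCS (mul_le_mul_of_nonneg_right hk' hSl0)
    -- d * Sm = n² + r (d - r) ≤ n² + d²
    have hn' : (n : ℝ) = d * q + r := by exact_mod_cast hdiv.symm
    have hnR : (8 : ℝ) * d ^ 3 ≤ n := by exact_mod_cast hn
    have hdR : (2 : ℝ) ≤ d := by exact_mod_cast hd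
    have hrR : (r : ℝ) ≤ d - 1 := by
      have : (r : ℝ) + 1 ≤ d := by exact_mod_cast hrd
      linarith
    have hr0 : (0 : ℝ) ≤ r := by positivity
    have hkR : (1 : ℝ) ≤ k := by exact_mod_cast hk1
    have hq0 : (0 : ℝ) ≤ q := by positivity
    have hdk : (d : ℝ) - k ≤ d - 1 := by linarith
    have hn0R : (0 : ℝ) < n := by exact_mod_cast (by omega : 0 < n)
    have hn1R : (1 : ℝ) ≤ n := by exact_mod_cast (by omega : 1 ≤ n)
    set S := ∑ i : Fin k, ((l i : ℝ)) ^ 2 with hS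
    set Sm : ℝ := (d : ℝ) * q ^ 2 + r * (2 * q + 1) with hSmdef
    -- d * Sm = n^2 + r*(d-r) ≤ n^2 + d^2
    have h2 : (d : ℝ) * Sm ≤ (n : ℝ) ^ 2 + (d : ℝ) ^ 2 := by
      have hrd' : (0 : ℝ) ≤ (d : ℝ) - r := by linarith
      nlinarith [mul_le_mul_of_nonneg_right (by linarith : (r : ℝ) ≤ d) hrd']
    have hA : (d : ℝ) * (n : ℝ) ^ 2 ≤ (d : ℝ) * (((d : ℝ) - 1) * S) :=
      mul_le_mul_of_nonneg_left h1 (by linarith)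
    have hB : ((d : ℝ) - 1) * ((d : ℝ) * Sm) ≤ ((d : ℝ) - 1) * ((n : ℝ) ^ 2 + (d : ℝ) ^ 2) :=
      mul_le_mul_of_nonneg_left h2 (by linarith)
    have hC : 8 * (d : ℝ) ^ 3 * n ≤ (n : ℝ) ^ 2 := aux_C _ _ (by linarith) hnR
    have hD : ((d : ℝ) - 1) * (d : ℝ) ^ 2 + 2 * (d : ℝ) * ((d : ℝ) - 1) ^ 2 * (2 * n - 1)
        < 8 * (d : ℝ) ^ 3 * n := aux_poly _ _ hdR hn1R
    have hpos : (0 : ℝ) < (d : ℝ) * ((d : ℝ) - 1) := mul_pos (by linarith) (by linarith)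
    have e2 : (d : ℝ) * ((d : ℝ) - 1) * (Sm + 2 * ((d : ℝ) - 1) * (2 * n - 1))
        < (d : ℝ) * ((d : ℝ) - 1) * S := by linarith [hA, hB, hC, hD]
    have key : Sm + 2 * ((d : ℝ) - 1) * (2 * n - 1) < S := (mul_lt_mul_iff_right₀ hpos).1 e2
    have hlast : ((d : ℝ) - k) * (2 * n - 1) ≤ ((d : ℝ) - 1) * (2 * n - 1) :=
      mul_le_mul_of_nonneg_right hdk (by linarith)
    linarith
end

section
/- Among all partitions of 24 into positive integer parts l₁ ≥ ⋯ ≥ l_k, the function f(l₁,…,l_k) = (l₁² + ⋯ + l_k²)/2 + k·47 + 12 attains its minimum uniquely at the partition (8, 8, 8), i.e., at k = 3 with all parts equal to 8 (where the minimal value is 249). Consequently, among the star-of-chains graphs with 24 edges of equal length, the one consisting of exactly three chains of 8 edges each minimizes T_Γ evaluated at equal edge lengths. -/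
/-- Among all partitions of `24` into `k` positive integer parts
`l₁,…,l_k`, the function `f(l) = (l₁²+⋯+l_k²)/2 + 47 k + 12` (which is the value of the
asymmetric part `T_Γ` of `2 P₂` for the star of chains `Γ_{l₁,…,l_k}` with `24` edges at
unit edge lengths) attains its minimum, which equals `249`, uniquely at the partition
`(8,8,8)` — i.e. at `k = 3` with all parts equal to `8`. -/
theorem star_of_three_chains_of_eight_minimizes :
    (∑ _i : Fin 3, ((8 : ℕ) : ℝ) ^ 2) / 2 + 47 * (3 : ℕ) + 12 = 249 ∧
    ∀ (k : ℕ) (l : Fin k → ℕ), (∀ i, 1 ≤ l i) → ∑ i, l i = 24 →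
      (249 : ℝ) ≤ (∑ i, (l i : ℝ) ^ 2) / 2 + 47 * k + 12 ∧
      ((∑ i, (l i : ℝ) ^ 2) / 2 + 47 * k + 12 = 249 → k = 3 ∧ ∀ i, l i = 8) := by
  constructor
  · norm_num
  · intro k l hl hsum
    have hsumR : ∑ i, (l i : ℝ) = 24 := by exact_mod_cast hsum
    set S : ℝ := ∑ i, (l i : ℝ) ^ 2 with hS
    have e8 : ∑ i, ((l i : ℝ) - 8) ^ 2 = S - 16 * 24 + 64 * k := by
      have : ∀ i ∈ Finset.univ, ((l i : ℝ) - 8) ^ 2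
          = (l i : ℝ) ^ 2 - 16 * (l i : ℝ) + 64 := fun i _ => by ring
      rw [Finset.sum_congr rfl this, Finset.sum_add_distrib, Finset.sum_sub_distrib,
        ← Finset.mul_sum, hsumR, Finset.sum_const, Finset.card_univ, Fintype.card_fin]
      ring
    have e12 : ∑ i, ((l i : ℝ) - 12) ^ 2 = S - 24 * 24 + 144 * k := by
      have : ∀ i ∈ Finset.univ, ((l i : ℝ) - 12) ^ 2
          = (l i : ℝ) ^ 2 - 24 * (l i : ℝ) + 144 := fun i _ => by ring
      rw [Finset.sum_congr rfl this, Finset.sum_add_distrib, Finset.sum_sub_distrib,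
        ← Finset.mul_sum, hsumR, Finset.sum_const, Finset.card_univ, Fintype.card_fin]
      ring
    have h8 : (0 : ℝ) ≤ S - 16 * 24 + 64 * k := e8 ▸ Finset.sum_nonneg fun i _ => sq_nonneg _
    have h12 : (0 : ℝ) ≤ S - 24 * 24 + 144 * k := e12 ▸ Finset.sum_nonneg fun i _ => sq_nonneg _
    have hk2 : k ≤ 2 ∨ 3 ≤ k := by omega
    have hlow : k ≤ 2 → (250 : ℝ) ≤ S / 2 + 47 * k + 12 := by
      intro hk
      have hkR : (k : ℝ) ≤ 2 := by exact_mod_cast hk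
      nlinarith [h12]
    have hhigh : 3 ≤ k → (204 : ℝ) + 15 * k ≤ S / 2 + 47 * k + 12 := by
      intro _; nlinarith [h8]
    constructor
    · rcases hk2 with hk | hk
      · linarith [hlow hk]
      · have hkR : (3 : ℝ) ≤ (k : ℝ) := by exact_mod_cast hk
        linarith [hhigh hk]
    · intro heq
      have hk3 : k = 3 := by
        rcases hk2 with hk | hk
        · linarith [hlow hk]
        · by_contra h
          have hk4 : 4 ≤ k := by omega
          have hkR : (4 : ℝ) ≤ (k : ℝ) := by exact_mod_cast hk4
          linarith [hhigh hk]
      refine ⟨hk3, ?_⟩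
      have hSval : S = 192 := by
        rw [hk3] at heq; push_cast at heq; linarith
      have hzero : ∑ i, ((l i : ℝ) - 8) ^ 2 = 0 := by
        rw [e8, hSval, hk3]; norm_num
      intro i
      have := (Finset.sum_eq_zero_iff_of_nonneg (fun i _ => sq_nonneg ((l i : ℝ) - 8))).mp
        hzero i (Finset.mem_univ i)
      have : (l i : ℝ) = 8 := by
        have := pow_eq_zero_iff (n := 2) (by norm_num) |>.mp this
        linarith
      exact_mod_cast this
end
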